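/- arXiv:1303.2547 — 7 statements merged into one kernel-verified Lean document; each statement's English description precedes it below -/
import Mathlib

section
/- For m ≥ 4, the only codewords of weight m − 1 in the dual code C^(m)⊥ (the row space of H_m over F_2) are exactly the m rows of H_m. -/
open Finset

/-- Coordinate positions of `C^(m)`: the 2-element subsets of `{1,…,m}`. -/
abbrev Coords (m : ℕ) := {s : Finset (Fin m) // s.card = 2}

/-- The parity check matrix `H_m`, whose columns are all weight-2 vectors of length `m`. -/
def Hmat (m : ℕ) (i : Fin m) (c : Coords m) : ZMod 2 := if i ∈ c.1 then 1 else 0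

/-- The code `C^(m)`: the kernel of `H_m` over `F_2`. -/
noncomputable def Cm (m : ℕ) : Submodule (ZMod 2) (Coords m → ZMod 2) :=
  LinearMap.ker (Matrix.mulVecLin (Matrix.of fun i c => Hmat m i c))

/-- The distance from a vector `x` to a code `C`. -/
noncomputable def distToCode {ι : Type*} [Fintype ι]
    (C : Set (ι → ZMod 2)) (x : ι → ZMod 2) : ℕ :=
  sInf {d | ∃ c ∈ C, hammingDist x c = d}

/-- The covering radius of a code `C`. -/
noncomputable def covRad {ι : Type*} [Fintype ι] (C : Set (ι → ZMod 2)) : ℕ :=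
  sSup {d | ∃ x, distToCode C x = d}

/-- `C(i)`, the set of vectors at distance exactly `i` from `C`. -/
noncomputable def Cset {ι : Type*} [Fintype ι] (C : Set (ι → ZMod 2)) (i : ℕ) :
    Set (ι → ZMod 2) := {x | distToCode C x = i}

/-- The coset `x + C`. -/
def cosetOf {ι : Type*} (C : Set (ι → ZMod 2)) (x : ι → ZMod 2) : Set (ι → ZMod 2) :=
  (fun c => x + c) '' C

/-- The weight of the coset `x + C`: the minimum Hamming weight of its elements. -/
noncomputable def cosetWt {ι : Type*} [Fintype ι] (C : Set (ι → ZMod 2)) (x : ι → ZMod 2) : ℕ :=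
  sInf {w | ∃ v ∈ cosetOf C x, hammingNorm v = w}

/-- Complete regularity of a code `C` with covering radius `ρ` and
intersection numbers `b i`, `c i`. -/
noncomputable def compRegular {ι : Type*} [Fintype ι] (C : Set (ι → ZMod 2)) (ρ : ℕ)
    (b c : ℕ → ℕ) : Prop :=
  (∀ i, 1 ≤ i → i ≤ ρ → ∀ x ∈ Cset C i,
      Nat.card {y | hammingDist x y = 1 ∧ y ∈ Cset C (i - 1)} = c i) ∧
  (∀ i, i < ρ → ∀ x ∈ Cset C i,
      Nat.card {y | hammingDist x y = 1 ∧ y ∈ Cset C (i + 1)} = b i)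

/-- The action of a coordinate permutation on vectors. -/
def permAct {ι : Type*} (π : Equiv.Perm ι) (v : ι → ZMod 2) : ι → ZMod 2 := v ∘ π

/-- The automorphism group of a code, as a set of coordinate permutations. -/
def autSet {ι : Type*} (C : Set (ι → ZMod 2)) : Set (Equiv.Perm ι) :=
  {π | ∀ v, permAct π v ∈ C ↔ v ∈ C}

/-- Complete transitivity: any two cosets of the same weight are related by
an automorphism of the code. -/
noncomputable def compTrans {ι : Type*} [Fintype ι] (C : Set (ι → ZMod 2)) : Prop :=
  ∀ x x', distToCode C x = distToCode C x' →
    ∃ π ∈ autSet C, permAct π '' cosetOf C x = cosetOf C x'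

lemma Hmat_sum_apply (m : ℕ) (T : Finset (Fin m)) (c : Coords m) :
    (∑ i ∈ T, Hmat m i) c = ((T ∩ c.1).card : ZMod 2) := by
  classical
  rw [Finset.sum_apply]
  simp only [Hmat]
  rw [Finset.sum_boole, ← Finset.filter_mem_eq_inter]

lemma Hmat_coord_ne_zero (m : ℕ) (T : Finset (Fin m)) (c : Coords m) :
    (∑ i ∈ T, Hmat m i) c ≠ 0 ↔ (T ∩ c.1).card = 1 := by
  classical
  rw [Hmat_sum_apply, Ne, ZMod.natCast_eq_zero_iff]
  have hle : (T ∩ c.1).card ≤ 2 := by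
    calc (T ∩ c.1).card ≤ c.1.card := Finset.card_le_card (Finset.inter_subset_right)
    _ = 2 := c.2
  omega

lemma Hmat_count (m : ℕ) (T : Finset (Fin m)) :
    ({c : Coords m | (T ∩ c.1).card = 1} : Finset (Coords m)).card
      = T.card * (m - T.card) := by
  classical
  have h := Finset.card_bij (s := T ×ˢ Tᶜ)
    (t := ({c : Coords m | (T ∩ c.1).card = 1} : Finset (Coords m)))
    (fun p hp => ⟨{p.1, p.2}, by
      simp only [Finset.mem_product, Finset.mem_compl] at hp
      rw [Finset.card_insert_of_notMem, Finset.card_singleton]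
      simp only [Finset.mem_singleton]
      intro h; exact hp.2 (h ▸ hp.1)⟩)
    ?_ ?_ ?_
  · rw [← h, Finset.card_product, Finset.card_compl, Fintype.card_fin]
  · rintro ⟨a, b⟩ hp
    simp only [Finset.mem_product, Finset.mem_compl] at hp
    simp only [Finset.mem_filter, Finset.mem_univ, true_and, Set.mem_setOf_eq,
      Finset.mem_coe]
    have hT : T ∩ ({a, b} : Finset (Fin m)) = {a} := by
      ext x
      simp only [Finset.mem_inter, Finset.mem_insert, Finset.mem_singleton]
      constructor
      · rintro ⟨hxT, (rfl | rfl)⟩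
        · rfl
        · exact absurd hxT hp.2
      · rintro rfl; exact ⟨hp.1, Or.inl rfl⟩
    rw [hT, Finset.card_singleton]
  · rintro ⟨a, b⟩ hp ⟨a', b'⟩ hp' heq
    simp only [Finset.mem_product, Finset.mem_compl] at hp hp'
    have h1 : ({a, b} : Finset (Fin m)) = {a', b'} := congrArg Subtype.val heq
    have ha : a' = a := by
      have : a' ∈ ({a, b} : Finset (Fin m)) := by rw [h1]; simp
      simp only [Finset.mem_insert, Finset.mem_singleton] at this
      rcases this with h | h
      · exact h
      · exact absurd (h ▸ hp'.1) hp.2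
    have hb : b' = b := by
      have : b' ∈ ({a, b} : Finset (Fin m)) := by rw [h1]; simp
      simp only [Finset.mem_insert, Finset.mem_singleton] at this
      rcases this with h | h
      · exact absurd (h ▸ hp'.2) (fun hh => hh hp.1)
      · exact h
    simp [ha, hb]
  · intro c hc
    simp only [Finset.mem_filter, Finset.mem_univ, true_and, Set.mem_setOf_eq,
      Finset.mem_coe] at hc
    obtain ⟨a, ha⟩ := Finset.card_eq_one.mp hc
    have hsd : (c.1 \ T).card = 1 := by
      have := Finset.card_inter_add_card_sdiff c.1 T
      rw [Finset.inter_comm] at this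
      rw [ha, Finset.card_singleton, c.2] at this
      omega
    obtain ⟨b, hb⟩ := Finset.card_eq_one.mp hsd
    have haT : a ∈ T ∧ a ∈ c.1 := by
      have : a ∈ T ∩ c.1 := ha ▸ Finset.mem_singleton_self a
      exact Finset.mem_inter.mp this
    have hbT : b ∈ c.1 ∧ b ∉ T := by
      have : b ∈ c.1 \ T := hb ▸ Finset.mem_singleton_self b
      exact Finset.mem_sdiff.mp this
    refine ⟨(a, b), ?_, ?_⟩
    · simp [Finset.mem_product, haT.1, hbT.2]
    · apply Subtype.ext
      have hab : a ≠ b := fun h => hbT.2 (h ▸ haT.1)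
      have hsub : ({a, b} : Finset (Fin m)) ⊆ c.1 := by
        intro x hx
        simp only [Finset.mem_insert, Finset.mem_singleton] at hx
        rcases hx with rfl | rfl
        · exact haT.2
        · exact hbT.1
      have hcard : ({a, b} : Finset (Fin m)).card = 2 := by
        rw [Finset.card_insert_of_notMem (by simpa using hab), Finset.card_singleton]
      exact (Finset.eq_of_subset_of_card_le hsub (by rw [hcard, c.2]))

lemma Hmat_weight (m : ℕ) (T : Finset (Fin m)) :
    hammingNorm (∑ i ∈ T, Hmat m i) = T.card * (m - T.card) := by
  classical
  rw [← Hmat_count m T]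
  unfold hammingNorm
  congr 1
  apply Finset.filter_congr
  intro c _
  simpa using Hmat_coord_ne_zero m T c

lemma Hmat_sum_univ (m : ℕ) : ∑ i : Fin m, Hmat m i = 0 := by
  classical
  funext c
  rw [Hmat_sum_apply]
  rw [Finset.univ_inter, c.2]
  simp
  decide

/-- for m ≥ 4, the only codewords of weight m-1 in the row space of H_m
are the rows of H_m. -/
theorem stmt_3 (m : ℕ) (hm : 4 ≤ m) (v : Coords m → ZMod 2)
    (hv : v ∈ Submodule.span (ZMod 2) (Set.range (Hmat m))) :
    hammingNorm v = m - 1 ↔ v ∈ Set.range (Hmat m) := by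
  classical
  have hone : ∀ x : ZMod 2, x ≠ 0 → x = 1 := by decide
  obtain ⟨cf, hcf⟩ := (Submodule.mem_span_range_iff_exists_fun (ZMod 2)).mp hv
  set T : Finset (Fin m) := {i | cf i ≠ 0} with hTdef
  have hvT : v = ∑ i ∈ T, Hmat m i := by
    have hsub : ∑ i ∈ T, cf i • Hmat m i = ∑ i : Fin m, cf i • Hmat m i :=
      Finset.sum_subset (Finset.subset_univ T)
        (fun x _ hx => by
          have : cf x = 0 := by
            by_contra hne
            exact hx (Finset.mem_filter.mpr ⟨Finset.mem_univ x, hne⟩)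
          simp [this])
    rw [← hcf, ← hsub]
    apply Finset.sum_congr rfl
    intro i hi
    rw [hone _ (Finset.mem_filter.mp hi).2, one_smul]
  constructor
  · intro hw
    rw [hvT, Hmat_weight] at hw
    have htm : T.card ≤ m := by simpa using Finset.card_le_univ T
    have hcases : T.card = 1 ∨ T.card = m - 1 := by
      have hc : ((T.card : ℤ)) * ((m : ℤ) - T.card) = (m : ℤ) - 1 := by
        have := congrArg (Nat.cast : ℕ → ℤ) hw
        push_cast [htm, Nat.one_le_iff_ne_zero.mpr (by omega : m ≠ 0)] at this
        convert this using 2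
      have h2 : ((T.card : ℤ) - 1) * ((T.card : ℤ) - ((m : ℤ) - 1)) = 0 := by
        nlinarith [hc]
      rcases mul_eq_zero.mp h2 with h | h
      · left; omega
      · right; omega
    rcases hcases with h1 | h1
    · obtain ⟨i, hi⟩ := Finset.card_eq_one.mp h1
      exact ⟨i, by rw [hvT, hi, Finset.sum_singleton]⟩
    · have hcc : Tᶜ.card = 1 := by
        rw [Finset.card_compl, Fintype.card_fin, h1]; omega
      obtain ⟨j, hj⟩ := Finset.card_eq_one.mp hcc
      have hT : T = Finset.univ.erase j := by
        have : T = ({j} : Finset (Fin m))ᶜ := by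
          rw [← hj, compl_compl]
        rw [this]
        ext x
        simp [Finset.mem_compl, Finset.mem_erase, eq_comm]
      refine ⟨j, ?_⟩
      funext c
      have hsum : (Hmat m j + ∑ i ∈ Finset.univ.erase j, Hmat m i) = 0 := by
        rw [Finset.add_sum_erase _ _ (Finset.mem_univ j), Hmat_sum_univ]
      have hz : ∀ x y : ZMod 2, x + y = 0 → x = y := by decide
      have := congrFun hsum c
      rw [Pi.add_apply] at this
      rw [hvT, hT]
      exact hz _ _ this
  · rintro ⟨i, rfl⟩
    have : Hmat m i = ∑ k ∈ ({i} : Finset (Fin m)), Hmat m k := by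
      rw [Finset.sum_singleton]
    rw [this, Hmat_weight, Finset.card_singleton, one_mul]
end

section
/- The covering radius of the code C^(m) equals ⌊m/2⌋ for all m ≥ 3. -/
open Finset

namespace Stmt6

variable {m : ℕ}

noncomputable def sig (x : Coords m → ZMod 2) : Fin m → ZMod 2 :=
  Matrix.mulVecLin (Matrix.of fun i c => Hmat m i c) x

lemma mem_Cm {x : Coords m → ZMod 2} : x ∈ Cm m ↔ sig x = 0 := by
  simp [Cm, LinearMap.mem_ker, sig]

lemma sig_add (x y : Coords m → ZMod 2) : sig (x + y) = sig x + sig y :=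
  map_add (Matrix.mulVecLin _) x y

lemma sig_apply (x : Coords m → ZMod 2) (i : Fin m) :
    sig x i = ∑ c : Coords m, (if i ∈ c.1 then (1 : ZMod 2) else 0) * x c := by
  simp [sig, Matrix.mulVecLin_apply, Matrix.mulVec, dotProduct, Hmat]

noncomputable def oddSet (x : Coords m → ZMod 2) : Finset (Fin m) :=
  Finset.univ.filter fun i => sig x i ≠ 0

lemma mem_oddSet {x : Coords m → ZMod 2} {i : Fin m} : i ∈ oddSet x ↔ sig x i ≠ 0 := by
  simp [oddSet]

lemma card_oddSet_le (x : Coords m → ZMod 2) :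
    (oddSet x).card ≤ 2 * hammingNorm x := by
  classical
  have hsub : oddSet x ⊆ (Finset.univ.filter fun c : Coords m => x c ≠ 0).biUnion
      (fun c => c.1) := by
    intro i hi
    rw [mem_oddSet, sig_apply] at hi
    obtain ⟨c, -, hc⟩ := Finset.exists_ne_zero_of_sum_ne_zero hi
    by_cases h : i ∈ c.1
    · simp only [h, if_true, one_mul] at hc
      exact Finset.mem_biUnion.2 ⟨c, by simp [hc], h⟩
    · simp [h] at hc
  calc (oddSet x).card
      ≤ _ := Finset.card_le_card hsub
    _ ≤ ∑ c ∈ Finset.univ.filter fun c : Coords m => x c ≠ 0, c.1.card :=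
        Finset.card_biUnion_le
    _ = 2 * hammingNorm x := by
        rw [Finset.sum_congr rfl (fun c _ => c.2), Finset.sum_const, smul_eq_mul]
        simp [hammingNorm, mul_comm]

lemma even_card_oddSet (x : Coords m → ZMod 2) : Even (oddSet x).card := by
  classical
  have h0 : ∑ i : Fin m, sig x i = 0 := by
    have hcol : ∀ c : Coords m,
        ∑ i : Fin m, (if i ∈ c.1 then (1 : ZMod 2) else 0) * x c = 0 := by
      intro c
      rw [← Finset.sum_mul]
      have : ∑ i : Fin m, (if i ∈ c.1 then (1 : ZMod 2) else 0) = (c.1.card : ZMod 2) := by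
        rw [Finset.sum_ite_mem, Finset.univ_inter, Finset.sum_const, nsmul_eq_mul, mul_one]
      rw [this, c.2]
      have h2 : ((2 : ℕ) : ZMod 2) = 0 := by decide
      rw [h2, zero_mul]
    calc ∑ i : Fin m, sig x i
        = ∑ i : Fin m, ∑ c : Coords m, (if i ∈ c.1 then (1 : ZMod 2) else 0) * x c := by
          exact Finset.sum_congr rfl fun i _ => sig_apply x i
      _ = ∑ c : Coords m, ∑ i : Fin m, (if i ∈ c.1 then (1 : ZMod 2) else 0) * x c :=
          Finset.sum_comm
      _ = 0 := by rw [Finset.sum_congr rfl fun c _ => hcol c, Finset.sum_const, smul_zero]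
  have h1 : (((oddSet x).card : ℕ) : ZMod 2) = ∑ i : Fin m, sig x i := by
    rw [← Finset.sum_filter_ne_zero Finset.univ]
    have : ∀ i ∈ Finset.univ.filter fun i => sig x i ≠ 0, sig x i = 1 := by
      intro i hi
      have h := (Finset.mem_filter.mp hi).2
      revert h; generalize sig x i = a; revert a; decide
    rw [Finset.sum_congr rfl this, Finset.sum_const, nsmul_eq_mul, mul_one]
    rfl
  rw [h0] at h1
  have := (ZMod.natCast_eq_zero_iff _ 2).mp h1
  exact even_iff_two_dvd.mpr this

lemma hn_add_le (x y : Coords m → ZMod 2) :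
    hammingNorm (x + y) ≤ hammingNorm x + hammingNorm y := by
  classical
  refine le_trans (Finset.card_le_card ?_) (Finset.card_union_le _ _)
  intro i hi
  simp only [Finset.mem_filter, Finset.mem_union, Finset.mem_univ, true_and] at *
  by_contra h
  push_neg at h
  simp [Pi.add_apply, h.1, h.2] at hi

noncomputable def eVec (e : Coords m) : Coords m → ZMod 2 := fun c => if c = e then 1 else 0

lemma hn_eVec (e : Coords m) : hammingNorm (eVec e) = 1 := by
  classical
  have : (Finset.univ.filter fun c : Coords m => eVec e c ≠ 0) = {e} := by
    ext c
    simp only [Finset.mem_filter, Finset.mem_univ, true_and, Finset.mem_singleton, eVec]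
    by_cases h : c = e <;> simp [h]
  simp [hammingNorm, Finset.filter_univ_mem]
  rw [show ({c | eVec e c ≠ 0} : Finset (Coords m)) = Finset.univ.filter fun c => eVec e c ≠ 0 from rfl, this]
  rfl

lemma sig_eVec (e : Coords m) (i : Fin m) :
    sig (eVec e) i = if i ∈ e.1 then 1 else 0 := by
  classical
  rw [sig_apply, Finset.sum_eq_single e]
  · simp [eVec]
  · intro c _ hc; simp [eVec, hc]
  · simp

lemma sig_zero : sig (0 : Coords m → ZMod 2) = 0 := map_zero _

lemma exists_matching : ∀ n (T : Finset (Fin m)), T.card = n → Even n →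
    ∃ v : Coords m → ZMod 2, hammingNorm v ≤ n / 2 ∧
      ∀ i, sig v i = if i ∈ T then 1 else 0 := by
  classical
  intro n
  induction n using Nat.strong_induction_on with
  | _ n ih =>
    intro T hT hev
    rcases Nat.eq_zero_or_pos n with h0 | hpos
    · subst h0
      have hTe : T = ∅ := Finset.card_eq_zero.mp hT
      subst hTe
      exact ⟨0, by simp, fun i => by simp [sig_zero]⟩
    · have hn2 : 2 ≤ n := by
        obtain ⟨k, hk⟩ := hev; omega
      obtain ⟨a, ha, b, hb, hab⟩ := Finset.one_lt_card.mp (by omega : 1 < T.card)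
      have hba : b ≠ a := fun h => hab h.symm
      set e : Coords m := ⟨{a, b}, Finset.card_pair hab⟩ with he
      have he1 : e.1 = {a, b} := rfl
      set T' := (T.erase a).erase b with hT'
      have hbmem : b ∈ T.erase a := Finset.mem_erase.mpr ⟨hba, hb⟩
      have h2 : T'.card = n - 2 := by
        rw [hT', Finset.card_erase_of_mem hbmem, Finset.card_erase_of_mem ha, hT]
        omega
      obtain ⟨k, hk⟩ := hev
      obtain ⟨v', hv'n, hv's⟩ := ih (n - 2) (by omega) T' h2 ⟨k - 1, by omega⟩
      refine ⟨v' + eVec e, ?_, ?_⟩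
      · calc hammingNorm (v' + eVec e)
            ≤ hammingNorm v' + hammingNorm (eVec e) := hn_add_le _ _
          _ ≤ (n - 2) / 2 + 1 := by rw [hn_eVec]; exact Nat.add_le_add_right hv'n 1
          _ ≤ n / 2 := by omega
      · intro i
        have hstep : sig (v' + eVec e) i = sig v' i + sig (eVec e) i := by
          rw [sig_add]; rfl
        rw [hstep, hv's i, sig_eVec, he1]
        by_cases hia : i = a
        · subst hia
          have : i ∉ T' := by simp [hT', Finset.mem_erase]
          simp [this, ha]
        · by_cases hib : i = b
          · subst hib
            have : i ∉ T' := by simp [hT', Finset.mem_erase]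
            simp [this, hb]
          · have hiT' : i ∈ T' ↔ i ∈ T := by
              simp [hT', Finset.mem_erase, hia, hib]
            have hie : i ∉ ({a, b} : Finset (Fin m)) := by simp [hia, hib]
            by_cases hiT : i ∈ T <;> simp [hiT, hiT', hie]

lemma hammingDist_eq (x c : Coords m → ZMod 2) :
    hammingDist x c = hammingNorm (x + c) := by
  classical
  have key : ∀ a b : ZMod 2, (a ≠ b) ↔ (a + b ≠ 0) := by decide
  unfold hammingDist hammingNorm
  congr 1
  ext i
  simp only [Finset.mem_filter, Finset.mem_univ, true_and, Pi.add_apply]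
  exact key _ _

lemma distToCode_Cm (x : Coords m → ZMod 2) :
    distToCode (Cm m : Set (Coords m → ZMod 2)) x = (oddSet x).card / 2 := by
  classical
  obtain ⟨k, hk⟩ := even_card_oddSet x
  obtain ⟨v, hvn, hvs⟩ := exists_matching (oddSet x).card (oddSet x) rfl (even_card_oddSet x)
  have hone : ∀ a : ZMod 2, a ≠ 0 → a = 1 := by decide
  have hxv : x + v ∈ (Cm m : Set (Coords m → ZMod 2)) := by
    rw [SetLike.mem_coe, mem_Cm]
    funext i
    rw [Pi.zero_apply]
    have hstep : sig (x + v) i = sig x i + sig v i := by rw [sig_add]; rfl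
    rw [hstep, hvs i]
    by_cases hi : i ∈ oddSet x
    · have h1 : sig x i = 1 := hone _ (mem_oddSet.mp hi)
      simp [hi, h1]
      decide
    · have h1 : sig x i = 0 := by
        by_contra h
        exact hi (mem_oddSet.mpr h)
      simp [hi, h1]
  have hxx : x + (x + v) = v := by
    funext c
    have : ∀ a b : ZMod 2, a + (a + b) = b := by decide
    exact this _ _
  have hub : distToCode (Cm m : Set (Coords m → ZMod 2)) x ≤ (oddSet x).card / 2 := by
    have hd : hammingDist x (x + v) = hammingNorm v := by
      rw [hammingDist_eq, hxx]
    refine le_trans (Nat.sInf_le ⟨x + v, hxv, rfl⟩) ?_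
    rw [hd]; exact hvn
  have hne : {d | ∃ c ∈ (Cm m : Set (Coords m → ZMod 2)), hammingDist x c = d}.Nonempty :=
    ⟨hammingDist x 0, 0, Submodule.zero_mem _, rfl⟩
  have hlb : (oddSet x).card / 2 ≤ distToCode (Cm m : Set (Coords m → ZMod 2)) x := by
    obtain ⟨c, hc, hd⟩ := Nat.sInf_mem hne
    have hsameodd : oddSet (x + c) = oddSet x := by
      ext i
      have hc0 : sig c = 0 := mem_Cm.mp hc
      have : sig (x + c) i = sig x i := by
        have hstep : sig (x + c) i = sig x i + sig c i := by rw [sig_add]; rfl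
        rw [hstep, hc0]; simp
      simp [mem_oddSet, this]
    have hcount : (oddSet x).card ≤ 2 * hammingNorm (x + c) := by
      rw [← hsameodd]; exact card_oddSet_le _
    have hdist : hammingDist x c = hammingNorm (x + c) := hammingDist_eq x c
    have : distToCode (Cm m : Set (Coords m → ZMod 2)) x = hammingDist x c := hd.symm
    omega
  omega

end Stmt6

/-- the covering radius of C^(m) equals ⌊m/2⌋. -/
theorem stmt_6 (m : ℕ) (hm : 3 ≤ m) : covRad (Cm m : Set (Coords m → ZMod 2)) = m / 2 := by
  classical
  have key : ∀ x, distToCode (Cm m : Set (Coords m → ZMod 2)) x = (Stmt6.oddSet x).card / 2 :=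
    Stmt6.distToCode_Cm
  have hbound : ∀ d ∈ {d | ∃ x, distToCode (Cm m : Set (Coords m → ZMod 2)) x = d}, d ≤ m / 2 := by
    rintro d ⟨x, rfl⟩
    rw [key]
    have h1 : (Stmt6.oddSet x).card ≤ m := by
      have := Finset.card_le_card (Finset.subset_univ (Stmt6.oddSet x))
      simpa using this
    omega
  obtain ⟨T, hTsub, hTcard⟩ := Finset.exists_subset_card_eq (s := (Finset.univ : Finset (Fin m)))
    (n := 2 * (m / 2)) (by simp; omega)
  obtain ⟨v, hvn, hvs⟩ := Stmt6.exists_matching (2 * (m / 2)) T hTcard ⟨m / 2, by ring⟩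
  have hodd : Stmt6.oddSet v = T := by
    ext i
    rw [Stmt6.mem_oddSet, hvs i]
    by_cases h : i ∈ T <;> simp [h]
  have hmem : m / 2 ∈ {d | ∃ x, distToCode (Cm m : Set (Coords m → ZMod 2)) x = d} :=
    ⟨v, by rw [key, hodd, hTcard]; omega⟩
  refine le_antisymm (csSup_le ⟨_, hmem⟩ hbound) (le_csSup ⟨m / 2, fun d hd => hbound d hd⟩ hmem)
end

section
/- The syndrome map identifies cosets of C^(m) with vectors of even weight in F_2^m: for every vector x ∈ F_2^n, the syndrome H_m x^T is a vector of even Hamming weight in F_2^m, and every even-weight vector of F_2^m arises as a syndrome; the weight of the coset x + C^(m) (minimum weight of its elements) equals half the Hamming weight of its syndrome. -/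
open Finset

/-- The syndrome of a vector with respect to H_m. -/
noncomputable def synd (m : ℕ) (x : Coords m → ZMod 2) : Fin m → ZMod 2 :=
  Matrix.mulVecLin (Matrix.of fun i c => Hmat m i c) x

lemma synd_apply (m : ℕ) (x : Coords m → ZMod 2) (i : Fin m) :
    synd m x i = ∑ c, Hmat m i c * x c := by
  simp [synd, Matrix.mulVecLin_apply, Matrix.mulVec, dotProduct]

lemma synd_add (m : ℕ) (x y : Coords m → ZMod 2) :
    synd m (x + y) = synd m x + synd m y := by
  simp [synd, map_add]

lemma zmod2_ne_zero {z : ZMod 2} (h : z ≠ 0) : z = 1 := by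
  revert h; revert z; decide

lemma norm_cast_eq_sum {n : ℕ} (s : Fin n → ZMod 2) :
    ((hammingNorm s : ℕ) : ZMod 2) = ∑ i, s i := by
  rw [hammingNorm, ← Finset.sum_filter_ne_zero (s := univ) (f := fun i => s i)]
  rw [Finset.card_eq_sum_ones, Nat.cast_sum]
  refine Finset.sum_congr rfl fun i hi => ?_
  simp only [Finset.mem_filter] at hi
  simp [zmod2_ne_zero hi.2]

lemma sum_synd (m : ℕ) (x : Coords m → ZMod 2) : ∑ i, synd m x i = 0 := by
  simp only [synd_apply]
  rw [Finset.sum_comm]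
  refine Finset.sum_eq_zero fun c _ => ?_
  rw [← Finset.sum_mul]
  have : ∑ i, Hmat m i c = 0 := by
    simp only [Hmat]
    rw [Finset.sum_ite_mem, Finset.univ_inter, Finset.sum_const, c.2]
    decide
  rw [this, zero_mul]

lemma even_norm_synd (m : ℕ) (x : Coords m → ZMod 2) :
    Even (hammingNorm (synd m x)) := by
  rw [even_iff_two_dvd, ← ZMod.natCast_eq_zero_iff,
    norm_cast_eq_sum, sum_synd]


def pairv (m : ℕ) (c0 : Coords m) : Coords m → ZMod 2 := fun c => if c = c0 then 1 else 0

lemma synd_pairv (m : ℕ) (c0 : Coords m) :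
    synd m (pairv m c0) = fun i => if i ∈ c0.1 then 1 else 0 := by
  funext i
  rw [synd_apply]
  simp [pairv, Finset.sum_ite_eq', Hmat]

lemma norm_pairv (m : ℕ) (c0 : Coords m) : hammingNorm (pairv m c0) = 1 := by
  rw [hammingNorm]
  have : (filter (fun c => pairv m c0 c ≠ 0) univ) = {c0} := by
    ext c; simp [pairv]
  rw [this, Finset.card_singleton]

-- Lemma A : lower bound
lemma norm_le_two_mul (m : ℕ) (v : Coords m → ZMod 2) :
    hammingNorm (synd m v) ≤ 2 * hammingNorm v := by
  have hsub : (filter (fun i => synd m v i ≠ 0) univ) ⊆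
      (filter (fun c => v c ≠ 0) univ).biUnion (fun c => c.1) := by
    intro i hi
    simp only [Finset.mem_filter, Finset.mem_univ, true_and] at hi
    by_contra h
    simp only [Finset.mem_biUnion, Finset.mem_filter, Finset.mem_univ, true_and,
      not_exists, not_and] at h
    apply hi
    rw [synd_apply]
    refine Finset.sum_eq_zero fun c _ => ?_
    by_cases hc : v c = 0
    · rw [hc, mul_zero]
    · have := h c hc
      simp [Hmat, this]
  calc hammingNorm (synd m v) ≤ ((filter (fun c => v c ≠ 0) univ).biUnion (fun c => c.1)).card :=
        Finset.card_le_card hsub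
    _ ≤ ∑ c ∈ filter (fun c => v c ≠ 0) univ, c.1.card := Finset.card_biUnion_le
    _ = ∑ c ∈ filter (fun c => v c ≠ 0) univ, 2 := by
        exact Finset.sum_congr rfl fun c _ => c.2
    _ = 2 * hammingNorm v := by
        rw [Finset.sum_const, hammingNorm]; ring

-- Lemma B : construction by induction
lemma exists_synd_eq (m : ℕ) : ∀ k : ℕ, ∀ s : Fin m → ZMod 2, hammingNorm s = 2 * k →
    ∃ v, synd m v = s ∧ hammingNorm v ≤ k := by
  intro k
  induction k with
  | zero =>
    intro s hs
    refine ⟨0, ?_, by simp⟩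
    have : s = 0 := hammingNorm_eq_zero.mp (by omega)
    rw [this, synd, map_zero]
  | succ k ih =>
    intro s hs
    have hcard : (filter (fun i => s i ≠ 0) univ).card = 2 * k + 2 := by
      rw [← hammingNorm]; omega
    have h2 : 2 ≤ (filter (fun i => s i ≠ 0) univ).card := by omega
    obtain ⟨a, ha⟩ := Finset.card_pos.mp (by omega : 0 < (filter (fun i => s i ≠ 0) univ).card)
    have h1 : 0 < ((filter (fun i => s i ≠ 0) univ).erase a).card := by
      rw [Finset.card_erase_of_mem ha]; omega
    obtain ⟨b, hb⟩ := Finset.card_pos.mp h1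
    have hab : b ≠ a := Finset.ne_of_mem_erase hb
    have hb' : b ∈ filter (fun i => s i ≠ 0) univ := Finset.mem_of_mem_erase hb
    have hsa : s a = 1 := zmod2_ne_zero (Finset.mem_filter.mp ha).2
    have hsb : s b = 1 := zmod2_ne_zero (Finset.mem_filter.mp hb').2
    set c0 : Coords m := ⟨{a, b}, Finset.card_pair (Ne.symm hab)⟩ with hc0
    set s' : Fin m → ZMod 2 := s + synd m (pairv m c0) with hs'
    have hmem : ∀ i : Fin m, i ∈ c0.1 ↔ i = a ∨ i = b := by
      intro i; simp [hc0]
    have hfilter : filter (fun i => s' i ≠ 0) univ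
        = (filter (fun i => s i ≠ 0) univ) \ {a, b} := by
      ext i
      simp only [Finset.mem_filter, Finset.mem_univ, true_and, Finset.mem_sdiff,
        Finset.mem_insert, Finset.mem_singleton]
      have hs'i : s' i = s i + (if i ∈ c0.1 then 1 else 0) := by
        rw [hs', synd_pairv]; rfl
      by_cases hia : i = a
      · have h0 : s' i = 0 := by
          rw [hs'i, if_pos ((hmem i).mpr (Or.inl hia)), hia, hsa]; decide
        subst hia; simp [h0]
      · by_cases hib : i = b
        · have h0 : s' i = 0 := by
            rw [hs'i, if_pos ((hmem i).mpr (Or.inr hib)), hib, hsb]; decide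
          subst hib; simp [h0]
        · have hni : i ∉ c0.1 := by rw [hmem]; tauto
          rw [hs'i, if_neg hni, add_zero]
          simp [hia, hib]
    have hnorm' : hammingNorm s' = 2 * k := by
      rw [hammingNorm, hfilter, Finset.card_sdiff_of_subset]
      · rw [hcard, Finset.card_pair (Ne.symm hab)]; omega
      · intro i hi
        simp only [Finset.mem_insert, Finset.mem_singleton] at hi
        rcases hi with h | h <;> subst h <;> [exact ha; exact hb']
    obtain ⟨v', hv1, hv2⟩ := ih s' hnorm'
    refine ⟨v' + pairv m c0, ?_, ?_⟩
    · rw [synd_add, hv1, hs']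
      funext i
      simp only [Pi.add_apply]
      ring_nf
      have h20 : (2 : ZMod 2) = 0 := by decide
      rw [h20, mul_zero, add_zero]
    · have hsub : filter (fun c => (v' + pairv m c0) c ≠ 0) univ
          ⊆ insert c0 (filter (fun c => v' c ≠ 0) univ) := by
        intro c hc
        simp only [Finset.mem_filter, Finset.mem_univ, true_and, Pi.add_apply] at hc
        simp only [Finset.mem_insert, Finset.mem_filter, Finset.mem_univ, true_and]
        by_cases h : c = c0
        · exact Or.inl h
        · right; simpa [pairv, h] using hc
      calc hammingNorm (v' + pairv m c0)
          ≤ (insert c0 (filter (fun c => v' c ≠ 0) univ)).card := Finset.card_le_card hsub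
        _ ≤ (filter (fun c => v' c ≠ 0) univ).card + 1 := Finset.card_insert_le _ _
        _ ≤ k + 1 := by rw [← hammingNorm] at *; omega

lemma mem_Cm (m : ℕ) (v : Coords m → ZMod 2) : v ∈ Cm m ↔ synd m v = 0 := by
  rw [Cm, LinearMap.mem_ker]; rfl

lemma mem_cosetOf (m : ℕ) (x v : Coords m → ZMod 2) :
    v ∈ cosetOf (Cm m : Set (Coords m → ZMod 2)) x ↔ synd m v = synd m x := by
  constructor
  · rintro ⟨c, hc, rfl⟩
    show synd m (x + c) = synd m x
    rw [add_comm, synd_add, (mem_Cm m c).mp hc, zero_add]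
  · intro h
    refine ⟨x + v, ?_, ?_⟩
    · rw [SetLike.mem_coe, mem_Cm, synd_add, h]
      funext i
      simp only [Pi.add_apply, Pi.zero_apply]
      have : ∀ z : ZMod 2, z + z = 0 := by decide
      exact this _
    · funext c
      simp only [Pi.add_apply]
      have : ∀ z w : ZMod 2, z + (z + w) = w := by decide
      exact this _ _

/-- syndromes of C^(m) are exactly the even-weight vectors of F_2^m,
and the weight of a coset is half the weight of its syndrome. -/
theorem stmt_7 (m : ℕ) (hm : 3 ≤ m) :
    (∀ x : Coords m → ZMod 2, Even (hammingNorm (synd m x))) ∧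
    (∀ s : Fin m → ZMod 2, Even (hammingNorm s) → ∃ x, synd m x = s) ∧
    (∀ x : Coords m → ZMod 2,
      cosetWt (Cm m : Set (Coords m → ZMod 2)) x = hammingNorm (synd m x) / 2) := by
  refine ⟨even_norm_synd m, ?_, ?_⟩
  · intro s hs
    obtain ⟨k, hk⟩ := hs
    obtain ⟨v, hv, -⟩ := exists_synd_eq m k s (by omega)
    exact ⟨v, hv⟩
  · intro x
    obtain ⟨k, hk⟩ := even_norm_synd m x
    have hk' : hammingNorm (synd m x) = 2 * k := by omega
    obtain ⟨v0, hv0s, hv0n⟩ := exists_synd_eq m k (synd m x) hk'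
    have hlow : ∀ v : Coords m → ZMod 2, synd m v = synd m x → k ≤ hammingNorm v := by
      intro v hv
      have := norm_le_two_mul m v
      rw [hv, hk'] at this
      omega
    have hv0k : hammingNorm v0 = k := le_antisymm hv0n (hlow v0 hv0s)
    have hmemS : k ∈ {w | ∃ v ∈ cosetOf (Cm m : Set (Coords m → ZMod 2)) x, hammingNorm v = w} :=
      ⟨v0, (mem_cosetOf m x v0).mpr hv0s, hv0k⟩
    have : cosetWt (Cm m : Set (Coords m → ZMod 2)) x = k := by
      refine le_antisymm (Nat.sInf_le hmemS) ?_
      have hne : {w | ∃ v ∈ cosetOf (Cm m : Set (Coords m → ZMod 2)) x,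
          hammingNorm v = w}.Nonempty := ⟨k, hmemS⟩
      obtain ⟨v, hv, hw⟩ := Nat.sInf_mem hne
      rw [cosetWt]
      rw [← hw]
      exact hlow v ((mem_cosetOf m x v).mp hv)
    rw [this, hk']
    omega
end

section
/- Let C ⊆ F_2^n be a binary linear code with covering radius ρ such that C(ρ) = C + 1, and let A = C ∪ C(ρ). Then A is a linear code, and if C is completely transitive (the cosets of C fall into exactly ρ+1 orbits under the action of Aut(C), one for each weight class), then A is completely transitive: for any two cosets of A of the same weight s there exists a permutation in Aut(A) mapping one to the other. -/
open Finset

section Aux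

variable {n : ℕ}

lemma zmod2_cases (a : ZMod 2) : a = 0 ∨ a = 1 := by revert a; decide

lemma char2_add_add (x t : Fin n → ZMod 2) : x + t + t = x := by
  funext i; simp [CharTwo.add_self_eq_zero, add_assoc]

lemma hd_trans (x c t : Fin n → ZMod 2) : hammingDist (x + t) (c + t) = hammingDist x c := by
  unfold hammingDist
  congr 1
  apply Finset.filter_congr
  intro i _
  simp only [Pi.add_apply]
  constructor
  · intro h hc; exact h (by rw [hc])
  · intro h hc; exact h (add_right_cancel hc)

lemma nat_sInf_union {S T : Set ℕ} (hS : S.Nonempty) (hT : T.Nonempty) :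
    sInf (S ∪ T) = min (sInf S) (sInf T) := by
  apply le_antisymm
  · rcases le_total (sInf S) (sInf T) with h | h
    · rw [min_eq_left h]; exact csInf_le_csInf (OrderBot.bddBelow _) hS Set.subset_union_left
    · rw [min_eq_right h]; exact csInf_le_csInf (OrderBot.bddBelow _) hT Set.subset_union_right
  · have hmem := Nat.sInf_mem (hS.mono Set.subset_union_left : (S ∪ T).Nonempty)
    rcases hmem with h | h
    · exact le_trans (min_le_left _ _) (Nat.sInf_le h)
    · exact le_trans (min_le_right _ _) (Nat.sInf_le h)

lemma permAct_add (π : Equiv.Perm (Fin n)) (a b : Fin n → ZMod 2) :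
    permAct π (a + b) = permAct π a + permAct π b := rfl

lemma permAct_one (π : Equiv.Perm (Fin n)) :
    permAct π (fun _ => (1 : ZMod 2)) = fun _ => 1 := rfl

lemma perm_image {S : Set (Fin n → ZMod 2)} {π : Equiv.Perm (Fin n)} (hπ : π ∈ autSet S) :
    permAct π '' S = S := by
  ext z
  constructor
  · rintro ⟨c, hc, rfl⟩; exact (hπ c).mpr hc
  · intro hz
    refine ⟨z ∘ π.symm, ?_, ?_⟩
    · apply (hπ (z ∘ π.symm)).mp
      have : permAct π (z ∘ π.symm) = z := by funext i; simp [permAct]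
      rwa [this]
    · funext i; simp [permAct]

lemma char2_self_add (a b : Fin n → ZMod 2) : a + (a + b) = b := by
  funext i; simp [← add_assoc, CharTwo.add_self_eq_zero]

lemma mem_coset_iff (S : Set (Fin n → ZMod 2)) (x z : Fin n → ZMod 2) :
    z ∈ cosetOf S x ↔ x + z ∈ S := by
  constructor
  · rintro ⟨c, hc, rfl⟩
    show x + (x + c) ∈ S
    rw [char2_self_add]; exact hc
  · intro h
    exact ⟨x + z, h, char2_self_add x z⟩

lemma coset_img {S : Set (Fin n → ZMod 2)} {π : Equiv.Perm (Fin n)} (hπ : π ∈ autSet S)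
    (y : Fin n → ZMod 2) :
    permAct π '' cosetOf S y = cosetOf S (permAct π y) := by
  unfold cosetOf
  rw [← Set.image_comp]
  have h1 : (permAct π ∘ fun c => y + c) = (fun c => permAct π y + c) ∘ permAct π := by
    funext c; simp [permAct_add]
  rw [h1, Set.image_comp, perm_image hπ]

lemma coset_shift (M : Submodule (ZMod 2) (Fin n → ZMod 2)) (y m : Fin n → ZMod 2)
    (hm : m ∈ M) : cosetOf (M : Set (Fin n → ZMod 2)) (y + m) = cosetOf ↑M y := by
  ext z
  rw [mem_coset_iff, mem_coset_iff]
  have h1 : y + m + z = y + z + m := by ring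
  rw [h1]
  constructor
  · intro h
    have := M.add_mem h hm
    rwa [char2_add_add] at this
  · intro h; exact M.add_mem h hm

end Aux

/-- if C is completely transitive and C(ρ) = C + 1, then
A = C ∪ C(ρ) is a linear code which is completely transitive. -/
theorem stmt_10 {n : ℕ} (Csub : Submodule (ZMod 2) (Fin n → ZMod 2)) (ρ : ℕ)
    (hρ : covRad (Csub : Set (Fin n → ZMod 2)) = ρ)
    (hna : Cset (Csub : Set (Fin n → ZMod 2)) ρ =
      (fun v => v + (fun _ => 1)) '' (Csub : Set (Fin n → ZMod 2)))
    (hct : compTrans (Csub : Set (Fin n → ZMod 2))) :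
    (∃ A : Submodule (ZMod 2) (Fin n → ZMod 2),
      (A : Set (Fin n → ZMod 2)) =
        (Csub : Set (Fin n → ZMod 2)) ∪ Cset (Csub : Set (Fin n → ZMod 2)) ρ) ∧
    compTrans ((Csub : Set (Fin n → ZMod 2)) ∪ Cset (Csub : Set (Fin n → ZMod 2)) ρ) := by
  classical
  set one : Fin n → ZMod 2 := (fun _ => 1) with hone
  set A : Submodule (ZMod 2) (Fin n → ZMod 2) := Csub ⊔ Submodule.span (ZMod 2) {one} with hAdef
  have hone_mem : one ∈ A := Submodule.mem_sup_right (Submodule.mem_span_singleton_self one)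
  have hCA : ∀ v ∈ Csub, v ∈ A := fun v hv => Submodule.mem_sup_left hv
  have hA : (A : Set (Fin n → ZMod 2)) =
      (Csub : Set (Fin n → ZMod 2)) ∪ Cset (Csub : Set (Fin n → ZMod 2)) ρ := by
    rw [hna]
    ext v
    simp only [SetLike.mem_coe, hAdef, Submodule.mem_sup, Set.mem_union, Set.mem_image]
    constructor
    · rintro ⟨c, hc, s, hs, rfl⟩
      rw [Submodule.mem_span_singleton] at hs
      obtain ⟨a, rfl⟩ := hs
      rcases zmod2_cases a with rfl | rfl
      · left; simpa using hc
      · right; exact ⟨c, hc, by simp⟩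
    · rintro (hv | ⟨c, hc, rfl⟩)
      · exact ⟨v, hv, 0, Submodule.zero_mem _, by simp⟩
      · exact ⟨c, hc, one, Submodule.mem_span_singleton_self one, rfl⟩
  refine ⟨⟨A, hA⟩, ?_⟩
  -- distance to A is the min of the two distances to C
  have hdA : ∀ x, distToCode ((Csub : Set (Fin n → ZMod 2)) ∪ Cset ↑Csub ρ) x =
      min (distToCode (Csub : Set (Fin n → ZMod 2)) x)
          (distToCode (Csub : Set (Fin n → ZMod 2)) (x + one)) := by
    intro x
    have hset : {d | ∃ c ∈ (Csub : Set (Fin n → ZMod 2)) ∪ Cset ↑Csub ρ, hammingDist x c = d} =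
        {d | ∃ c ∈ (Csub : Set (Fin n → ZMod 2)), hammingDist x c = d} ∪
        {d | ∃ c ∈ (Csub : Set (Fin n → ZMod 2)), hammingDist (x + one) c = d} := by
      rw [hna]
      ext d
      simp only [Set.mem_union, Set.mem_setOf_eq, Set.mem_image]
      constructor
      · rintro ⟨c, (hc | ⟨c0, hc0, rfl⟩), rfl⟩
        · exact Or.inl ⟨c, hc, rfl⟩
        · right
          refine ⟨c0, hc0, ?_⟩
          have : c0 + one = c0 + one := rfl
          calc hammingDist (x + one) c0 = hammingDist (x + one) (c0 + one + one) := by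
                rw [char2_add_add]
            _ = hammingDist x (c0 + one) := hd_trans x (c0 + one) one
      · rintro (⟨c, hc, rfl⟩ | ⟨c, hc, rfl⟩)
        · exact ⟨c, Or.inl hc, rfl⟩
        · refine ⟨c + one, Or.inr ⟨c, hc, rfl⟩, ?_⟩
          calc hammingDist x (c + one) = hammingDist (x + one) (c + one + one) :=
                (hd_trans x (c + one) one).symm
            _ = hammingDist (x + one) c := by rw [char2_add_add]
    unfold distToCode
    rw [hset]
    exact nat_sInf_union ⟨_, 0, Submodule.zero_mem _, rfl⟩ ⟨_, 0, Submodule.zero_mem _, rfl⟩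
  -- automorphisms of C are automorphisms of A
  have hautA : autSet (Csub : Set (Fin n → ZMod 2)) ⊆
      autSet ((Csub : Set (Fin n → ZMod 2)) ∪ Cset ↑Csub ρ) := by
    intro π hπ v
    rw [hna]
    simp only [Set.mem_union, Set.mem_image]
    have hshift : ∀ w : Fin n → ZMod 2,
        (∃ c ∈ (Csub : Set (Fin n → ZMod 2)), c + one = w) ↔ w + one ∈ Csub := by
      intro w
      constructor
      · rintro ⟨c, hc, rfl⟩; rwa [char2_add_add]
      · intro h; exact ⟨w + one, h, by rw [char2_add_add]⟩
    rw [hshift, hshift]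
    have h2 : permAct π v + one = permAct π (v + one) := by
      rw [permAct_add, permAct_one]
    rw [h2]
    constructor
    · rintro (h | h)
      · exact Or.inl ((hπ v).mp h)
      · exact Or.inr ((hπ (v + one)).mp h)
    · rintro (h | h)
      · exact Or.inl ((hπ v).mpr h)
      · exact Or.inr ((hπ (v + one)).mpr h)
  -- translation invariance of A-cosets under elements of A
  have hcosA : ∀ (y m : Fin n → ZMod 2), m ∈ A →
      cosetOf ((Csub : Set (Fin n → ZMod 2)) ∪ Cset ↑Csub ρ) (y + m) =
      cosetOf ((Csub : Set (Fin n → ZMod 2)) ∪ Cset ↑Csub ρ) y := by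
    intro y m hm
    rw [← hA]
    exact coset_shift A y m hm
  intro x x' hdist
  rw [hdA x, hdA x'] at hdist
  -- choose representatives achieving the minimum
  have pick : ∀ y : Fin n → ZMod 2, ∃ t : Fin n → ZMod 2, t ∈ A ∧
      distToCode (Csub : Set (Fin n → ZMod 2)) (y + t) =
        min (distToCode (Csub : Set (Fin n → ZMod 2)) y)
            (distToCode (Csub : Set (Fin n → ZMod 2)) (y + one)) := by
    intro y
    rcases le_total (distToCode (Csub : Set (Fin n → ZMod 2)) y)
        (distToCode (Csub : Set (Fin n → ZMod 2)) (y + one)) with h | h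
    · exact ⟨0, Submodule.zero_mem _, by rw [add_zero, min_eq_left h]⟩
    · exact ⟨one, hone_mem, by rw [min_eq_right h]⟩
  obtain ⟨t, htA, ht⟩ := pick x
  obtain ⟨t', ht'A, ht'⟩ := pick x'
  have heq : distToCode (Csub : Set (Fin n → ZMod 2)) (x + t) =
      distToCode (Csub : Set (Fin n → ZMod 2)) (x' + t') := by rw [ht, ht', hdist]
  obtain ⟨π, hπC, himg⟩ := hct (x + t) (x' + t') heq
  refine ⟨π, hautA hπC, ?_⟩
  have hπA : π ∈ autSet ((Csub : Set (Fin n → ZMod 2)) ∪ Cset ↑Csub ρ) := hautA hπC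
  -- π (x + t) lies in the coset of x' + t'
  have hmem : permAct π (x + t) ∈ cosetOf (Csub : Set (Fin n → ZMod 2)) (x' + t') := by
    rw [← himg]
    exact ⟨x + t, ⟨0, Submodule.zero_mem _, by simp⟩, rfl⟩
  obtain ⟨c0, hc0, hc0eq⟩ := hmem
  calc permAct π '' cosetOf ((Csub : Set (Fin n → ZMod 2)) ∪ Cset ↑Csub ρ) x
      = cosetOf ((Csub : Set (Fin n → ZMod 2)) ∪ Cset ↑Csub ρ) (permAct π x) :=
        coset_img hπA x
    _ = cosetOf ((Csub : Set (Fin n → ZMod 2)) ∪ Cset ↑Csub ρ) (permAct π x + permAct π t) := by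
        have htU : t ∈ (Csub : Set (Fin n → ZMod 2)) ∪ Cset ↑Csub ρ := by
          rw [← hA]; exact htA
        have hπtA : permAct π t ∈ A := by
          rw [← SetLike.mem_coe, hA]; exact (hπA t).mpr htU
        exact (hcosA (permAct π x) (permAct π t) hπtA).symm
    _ = cosetOf ((Csub : Set (Fin n → ZMod 2)) ∪ Cset ↑Csub ρ) (permAct π (x + t)) := by
        rw [permAct_add]
    _ = cosetOf ((Csub : Set (Fin n → ZMod 2)) ∪ Cset ↑Csub ρ) (x' + t' + c0) := by rw [← hc0eq]
    _ = cosetOf ((Csub : Set (Fin n → ZMod 2)) ∪ Cset ↑Csub ρ) (x' + t') :=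
        hcosA (x' + t') c0 (hCA c0 hc0)
    _ = cosetOf ((Csub : Set (Fin n → ZMod 2)) ∪ Cset ↑Csub ρ) x' := hcosA x' t' ht'A
end

section
/- Let C ⊆ F_2^n be a completely regular code with covering radius ρ and intersection numbers b_i, c_i. Then C(ρ) is completely regular with covering radius ρ and intersection numbers b_i^r = c_{ρ−i} and c_i^r = b_{ρ−i}. -/
open Finset

section Aux

set_option linter.unusedSectionVars false

variable {ι : Type*} [Fintype ι] [DecidableEq ι]

lemma distSetNonempty (C : Set (ι → ZMod 2)) (hC : C.Nonempty) (x : ι → ZMod 2) :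
    {d | ∃ c ∈ C, hammingDist x c = d}.Nonempty := by
  obtain ⟨c, hc⟩ := hC
  exact ⟨hammingDist x c, c, hc, rfl⟩

lemma distToCode_exists (C : Set (ι → ZMod 2)) (hC : C.Nonempty) (x : ι → ZMod 2) :
    ∃ c ∈ C, hammingDist x c = distToCode C x :=
  Nat.sInf_mem (distSetNonempty C hC x)

lemma distToCode_le (C : Set (ι → ZMod 2)) {c : ι → ZMod 2} (hc : c ∈ C) (x : ι → ZMod 2) :
    distToCode C x ≤ hammingDist x c :=
  Nat.sInf_le ⟨c, hc, rfl⟩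

lemma distToCode_lipschitz (C : Set (ι → ZMod 2)) (hC : C.Nonempty) (x y : ι → ZMod 2) :
    distToCode C x ≤ distToCode C y + hammingDist x y := by
  obtain ⟨c, hc, hd⟩ := distToCode_exists C hC y
  calc distToCode C x ≤ hammingDist x c := distToCode_le C hc x
    _ ≤ hammingDist x y + hammingDist y c := hammingDist_triangle x y c
    _ = distToCode C y + hammingDist x y := by omega

lemma hd_update_self (x : ι → ZMod 2) (j : ι) (v : ZMod 2) (h : x j ≠ v) :
    hammingDist x (Function.update x j v) = 1 := by
  have : ({i | x i ≠ Function.update x j v i} : Finset ι) = {j} := by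
    ext i
    by_cases hij : i = j <;> simp [Function.update_apply, hij, h]
  rw [hammingDist, this, Finset.card_singleton]

lemma hd_update_toward (x c : ι → ZMod 2) (j : ι) (h : x j ≠ c j) :
    hammingDist (Function.update x j (c j)) c + 1 = hammingDist x c := by
  have hset : ({i | Function.update x j (c j) i ≠ c i} : Finset ι)
      = ({i | x i ≠ c i} : Finset ι).erase j := by
    ext i
    by_cases hij : i = j <;> simp [Function.update_apply, hij]
  have hj : j ∈ ({i | x i ≠ c i} : Finset ι) := by simp [h]
  rw [hammingDist, hammingDist, hset, Finset.card_erase_of_mem hj]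
  have : 0 < ({i | x i ≠ c i} : Finset ι).card := Finset.card_pos.mpr ⟨j, hj⟩
  omega

lemma neighbor_down (C : Set (ι → ZMod 2)) (hC : C.Nonempty) (x : ι → ZMod 2)
    (h : 1 ≤ distToCode C x) :
    ∃ y, hammingDist x y = 1 ∧ distToCode C y + 1 = distToCode C x := by
  obtain ⟨c, hc, hd⟩ := distToCode_exists C hC x
  have hpos : 0 < hammingDist x c := by omega
  obtain ⟨j, hj⟩ : ∃ j, x j ≠ c j := by
    by_contra hcon
    push_neg at hcon
    have hxc : x = c := funext hcon
    rw [hxc, hammingDist_self] at hpos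
    omega
  refine ⟨Function.update x j (c j), hd_update_self x j (c j) hj, ?_⟩
  have h1 : distToCode C (Function.update x j (c j)) ≤ hammingDist x c - 1 := by
    have h2 := distToCode_le C hc (Function.update x j (c j))
    have h3 := hd_update_toward x c j hj
    omega
  have h2 := distToCode_lipschitz C hC x (Function.update x j (c j))
  rw [hd_update_self x j (c j) hj] at h2
  omega

lemma covRad_bddAbove (C : Set (ι → ZMod 2)) (hC : C.Nonempty) :
    BddAbove {d | ∃ x, distToCode C x = d} := by
  obtain ⟨c, hc⟩ := hC
  refine ⟨Fintype.card ι, fun d hd => ?_⟩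
  obtain ⟨x, rfl⟩ := hd
  exact le_trans (distToCode_le C hc x) (hammingDist_le_card_fintype)

lemma distToCode_le_covRad (C : Set (ι → ZMod 2)) (hC : C.Nonempty) (x : ι → ZMod 2) :
    distToCode C x ≤ covRad C :=
  le_csSup (covRad_bddAbove C hC) ⟨x, rfl⟩

lemma exists_deep (C : Set (ι → ZMod 2)) (hC : C.Nonempty) :
    ∃ x, distToCode C x = covRad C := by
  have hne2 : {d | ∃ x, distToCode C x = d}.Nonempty :=
    ⟨distToCode C (fun _ => 0), fun _ => 0, rfl⟩
  exact Nat.sSup_mem hne2 (covRad_bddAbove C hC)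

lemma exists_chain (C : Set (ι → ZMod 2)) (hC : C.Nonempty) :
    ∀ t, t ≤ covRad C → ∃ x, distToCode C x = covRad C - t ∧
      (0 < t → ∃ y, hammingDist x y = 1 ∧ distToCode C y = covRad C - t + 1) := by
  intro t
  induction t with
  | zero =>
    intro _
    obtain ⟨x, hx⟩ := exists_deep C hC
    exact ⟨x, by omega, by omega⟩
  | succ t ih =>
    intro ht
    obtain ⟨x, hx, -⟩ := ih (by omega)
    have h1 : 1 ≤ distToCode C x := by omega
    obtain ⟨y, hy1, hy2⟩ := neighbor_down C hC x h1
    refine ⟨y, by omega, fun _ => ⟨x, ?_, by omega⟩⟩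
    rw [hammingDist_comm]; exact hy1

end Aux
/-- if C is completely regular with covering radius ρ and intersection
numbers b_i, c_i, then C(ρ) is completely regular with covering radius ρ and the
inverse intersection array. -/
theorem stmt_11 {n : ℕ} (Cc : Set (Fin n → ZMod 2)) (hne : Cc.Nonempty)
    (ρ : ℕ) (b c : ℕ → ℕ)
    (hρ : covRad Cc = ρ) (hcr : compRegular Cc ρ b c) :
    covRad (Cset Cc ρ) = ρ ∧
    compRegular (Cset Cc ρ) ρ (fun i => c (ρ - i)) (fun i => b (ρ - i)) := by
  -- basic facts about Cc
  have hdle : ∀ x, distToCode Cc x ≤ ρ := fun x => hρ ▸ distToCode_le_covRad Cc hne x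
  have hchain : ∀ t, t ≤ ρ → ∃ x, distToCode Cc x = ρ - t ∧
      (0 < t → ∃ y, hammingDist x y = 1 ∧ distToCode Cc y = ρ - t + 1) := by
    rw [← hρ]
    exact exists_chain Cc hne
  have hdeep : ∃ x, distToCode Cc x = ρ := by
    rw [← hρ]
    exact exists_deep Cc hne
  -- positivity of b below ρ
  have hbpos : ∀ i, i < ρ → 0 < b i := by
    intro i hi
    obtain ⟨x, hx1, hx2⟩ := hchain (ρ - i) (by omega)
    have hxd : distToCode Cc x = i := by clear hx2 hdeep hchain; omega
    obtain ⟨y, hy1, hy2⟩ := hx2 (by clear hdeep hchain; omega)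
    have hyd : distToCode Cc y = i + 1 := by clear hdeep hchain; omega
    have hcard := hcr.2 i hi x hxd
    have hmem : y ∈ {y | hammingDist x y = 1 ∧ y ∈ Cset Cc (i + 1)} := ⟨hy1, hyd⟩
    have hpos : 0 < Nat.card {y | hammingDist x y = 1 ∧ y ∈ Cset Cc (i + 1)} := by
      have : Nonempty {y | hammingDist x y = 1 ∧ y ∈ Cset Cc (i + 1)} := ⟨y, hmem⟩
      exact Nat.card_pos
    omega
  -- from any point strictly inside, one can go up
  have hup : ∀ x, distToCode Cc x < ρ →
      ∃ y, hammingDist x y = 1 ∧ distToCode Cc y = distToCode Cc x + 1 := by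
    intro x hx
    have hcard := hcr.2 (distToCode Cc x) hx x rfl
    have hpos : Nat.card {y | hammingDist x y = 1 ∧
        y ∈ Cset Cc (distToCode Cc x + 1)} ≠ 0 := by
      have := hbpos _ hx
      omega
    obtain ⟨⟨y, hy1, hy2⟩⟩ := (Nat.card_ne_zero.mp hpos).1
    exact ⟨y, hy1, hy2⟩
  -- walk upwards
  have hwalk : ∀ x t, distToCode Cc x + t ≤ ρ →
      ∃ z, distToCode Cc z = distToCode Cc x + t ∧ hammingDist x z ≤ t := by
    intro x t
    induction t with
    | zero => exact fun _ => ⟨x, by omega, by simp⟩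
    | succ t ih =>
      intro ht
      obtain ⟨z, hz1, hz2⟩ := ih (by omega)
      obtain ⟨y, hy1, hy2⟩ := hup z (by omega)
      refine ⟨y, by omega, ?_⟩
      calc hammingDist x y ≤ hammingDist x z + hammingDist z y := hammingDist_triangle x z y
        _ ≤ t + 1 := by omega
  -- C(ρ) is nonempty
  have hne' : (Cset Cc ρ).Nonempty := by
    obtain ⟨x, hx⟩ := hdeep
    exact ⟨x, hx⟩
  -- the distance formula
  have hdist' : ∀ x, distToCode (Cset Cc ρ) x = ρ - distToCode Cc x := by
    intro x
    apply le_antisymm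
    · obtain ⟨z, hz1, hz2⟩ := hwalk x (ρ - distToCode Cc x) (by have := hdle x; omega)
      have hzC : z ∈ Cset Cc ρ := by
        have := hdle x
        show distToCode Cc z = ρ
        omega
      exact le_trans (Nat.sInf_le ⟨z, hzC, rfl⟩) hz2
    · apply le_csInf (distSetNonempty _ hne' x)
      rintro d ⟨z, hz, rfl⟩
      have hz' : distToCode Cc z = ρ := hz
      have := distToCode_lipschitz Cc hne z x
      rw [hammingDist_comm z x] at this
      omega
  -- covering radius of C(ρ)
  have hcov' : covRad (Cset Cc ρ) = ρ := by
    have hnes : {d | ∃ x, distToCode (Cset Cc ρ) x = d}.Nonempty :=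
      ⟨distToCode (Cset Cc ρ) (fun _ => 0), fun _ => 0, rfl⟩
    apply le_antisymm
    · apply csSup_le hnes
      rintro d ⟨x, rfl⟩
      rw [hdist' x]
      omega
    · obtain ⟨c0, hc0⟩ := hne
      have hc0d : distToCode Cc c0 = 0 := by
        have h1 := distToCode_le Cc hc0 c0
        rw [hammingDist_self] at h1
        omega
      have hmem : ρ ∈ {d | ∃ x, distToCode (Cset Cc ρ) x = d} := by
        refine ⟨c0, ?_⟩
        rw [hdist' c0, hc0d]
        omega
      refine le_csSup ⟨ρ, ?_⟩ hmem
      rintro d ⟨x, rfl⟩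
      rw [hdist' x]
      omega
  -- distance classes of C(ρ)
  have hCset' : ∀ j, j ≤ ρ → Cset (Cset Cc ρ) j = Cset Cc (ρ - j) := by
    intro j hj
    ext x
    have hx := hdle x
    constructor
    · intro h
      have h' : distToCode (Cset Cc ρ) x = j := h
      rw [hdist' x] at h'
      show distToCode Cc x = ρ - j
      omega
    · intro h
      have h' : distToCode Cc x = ρ - j := h
      show distToCode (Cset Cc ρ) x = j
      rw [hdist' x]
      omega
  refine ⟨hcov', ?_, ?_⟩
  · -- down-neighbors: count = b (ρ - i)
    intro i h1 hi x hx
    have hx' : x ∈ Cset Cc (ρ - i) := by rwa [hCset' i hi] at hx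
    have he1 : ρ - (i - 1) = (ρ - i) + 1 := by omega
    have hs : Cset (Cset Cc ρ) (i - 1) = Cset Cc ((ρ - i) + 1) := by
      rw [hCset' (i - 1) (by omega), he1]
    have hcard := hcr.2 (ρ - i) (by omega) x hx'
    simp only [hs]
    exact hcard
  · -- up-neighbors: count = c (ρ - i)
    intro i hi x hx
    have hx' : x ∈ Cset Cc (ρ - i) := by rwa [hCset' i (le_of_lt hi)] at hx
    have he2 : ρ - (i + 1) = (ρ - i) - 1 := by omega
    have hs : Cset (Cset Cc ρ) (i + 1) = Cset Cc ((ρ - i) - 1) := by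
      rw [hCset' (i + 1) hi, he2]
    have hcard := hcr.1 (ρ - i) (by omega) (by omega) x hx'
    simp only [hs]
    exact hcard
end

section
/- For even m ≥ 6 with m ≡ 0 (mod 4), set ρ = m/4. The completely regular code C^[m] has intersection numbers b_i = C(m−2i, 2) and c_i = C(2i, 2) for i = 0, 1, …, ρ−1, and c_ρ = 2·C(2ρ, 2). -/
open Finset

open scoped symmDiff

namespace S14

variable {m : ℕ}

def synd (x : Coords m → ZMod 2) (i : Fin m) : ZMod 2 := ∑ c, Hmat m i c * x c

def Tset (x : Coords m → ZMod 2) : Finset (Fin m) := {i | synd x i = 1}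

lemma zmod2_cases (a : ZMod 2) : a = 0 ∨ a = 1 := by revert a; decide

lemma mem_Tset {x : Coords m → ZMod 2} {i : Fin m} : i ∈ Tset x ↔ synd x i = 1 := by
  simp [Tset]

lemma synd_eq_zero_of_not_mem {x : Coords m → ZMod 2} {i : Fin m} (h : i ∉ Tset x) :
    synd x i = 0 := by
  rcases zmod2_cases (synd x i) with h0 | h1
  · exact h0
  · exact absurd (mem_Tset.2 h1) h

lemma mem_Cm_iff {x : Coords m → ZMod 2} : x ∈ Cm m ↔ ∀ i, synd x i = 0 := by
  constructor
  · intro h i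
    have := congrFun (LinearMap.mem_ker.1 h) i
    simpa [Matrix.mulVecLin, Matrix.mulVec, dotProduct, synd] using this
  · intro h
    refine LinearMap.mem_ker.2 (funext fun i => ?_)
    simpa [Matrix.mulVecLin, Matrix.mulVec, dotProduct, synd] using h i

lemma mem_Cm_iff_Tset {x : Coords m → ZMod 2} : x ∈ Cm m ↔ Tset x = ∅ := by
  rw [mem_Cm_iff]
  constructor
  · intro h; ext i; simp [mem_Tset, h i]
  · intro h i
    refine synd_eq_zero_of_not_mem ?_
    simp [h]

lemma synd_add (x y : Coords m → ZMod 2) (i : Fin m) :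
    synd (x + y) i = synd x i + synd y i := by
  simp [synd, mul_add, Finset.sum_add_distrib]

lemma synd_single (c : Coords m) (i : Fin m) :
    synd (Pi.single c (1 : ZMod 2)) i = Hmat m i c := by
  rw [synd, Finset.sum_eq_single c]
  · simp
  · intro b _ hb; simp [Pi.single_eq_of_ne hb]
  · simp

end S14

namespace S14
variable {m : ℕ}

lemma sum_synd (x : Coords m → ZMod 2) : ∑ i, synd x i = 0 := by
  unfold synd
  rw [Finset.sum_comm]
  refine Finset.sum_eq_zero fun c _ => ?_
  rw [← Finset.sum_mul]
  have h1 : (∑ i, Hmat m i c) = (c.1.card : ZMod 2) := by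
    simp [Hmat, Finset.sum_ite_mem, Finset.inter_comm]
  rw [h1, c.2]
  have : ((2 : ℕ) : ZMod 2) = 0 := by decide
  rw [this, zero_mul]

lemma even_card_Tset (x : Coords m → ZMod 2) : Even (Tset x).card := by
  have h : ((Tset x).card : ZMod 2) = 0 := by
    have h2 : ∑ i, synd x i = ∑ i ∈ Tset x, (1 : ZMod 2) := by
      rw [← Finset.sum_subset (Finset.subset_univ (Tset x))
        (fun i _ hi => synd_eq_zero_of_not_mem hi)]
      exact Finset.sum_congr rfl fun i hi => mem_Tset.1 hi
    rw [← sum_synd x, h2, Finset.sum_const, nsmul_eq_mul, mul_one]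
  have := (ZMod.natCast_eq_zero_iff _ 2).1 h
  exact even_iff_two_dvd.2 this
end S14

namespace S14
variable {m : ℕ}

lemma hammingNorm_eq (x : Coords m → ZMod 2) :
    hammingNorm x = (Finset.univ.filter fun c => x c ≠ 0).card := rfl

lemma card_Tset_le (x : Coords m → ZMod 2) : (Tset x).card ≤ 2 * hammingNorm x := by
  have hsub : Tset x ⊆ (Finset.univ.filter fun c : Coords m => x c ≠ 0).biUnion
      (fun c => c.1) := by
    intro i hi
    have h1 : synd x i = 1 := mem_Tset.1 hi
    by_contra hc
    simp only [Finset.mem_biUnion, Finset.mem_filter, Finset.mem_univ, true_and,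
      not_exists, not_and] at hc
    have : synd x i = 0 := by
      refine Finset.sum_eq_zero fun c _ => ?_
      by_cases h : x c = 0
      · simp [h]
      · simp [Hmat, hc c h]
    rw [h1] at this; exact one_ne_zero this
  calc (Tset x).card ≤ _ := Finset.card_le_card hsub
    _ ≤ ∑ c ∈ Finset.univ.filter fun c : Coords m => x c ≠ 0, c.1.card :=
        Finset.card_biUnion_le
    _ = 2 * hammingNorm x := by
        rw [Finset.sum_congr rfl fun c _ => c.2, Finset.sum_const, hammingNorm_eq,
          smul_eq_mul, mul_comm]

lemma Tset_add_single (x : Coords m → ZMod 2) (c : Coords m) :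
    Tset (x + Pi.single c 1) = Tset x ∆ c.1 := by
  ext i
  rw [mem_Tset, Finset.mem_symmDiff]
  rw [synd_add, synd_single]
  unfold Hmat
  rcases zmod2_cases (synd x i) with h | h <;> by_cases hic : i ∈ c.1 <;>
    simp [mem_Tset, h, hic, show (1:ZMod 2)+1=0 from by decide]

lemma hammingNorm_add_le (x y : Coords m → ZMod 2) :
    hammingNorm (x + y) ≤ hammingNorm x + hammingNorm y := by
  have h := hammingDist_triangle (x + y) y (0 : Coords m → ZMod 2)
  have h1 : hammingDist (x + y) y = hammingNorm x := by
    rw [hammingDist_eq_hammingNorm]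
    have hab : ∀ a b : ZMod 2, b + a + b = a := by decide
    simp [hammingNorm, hab]
  have h2 : hammingDist (x + y) 0 = hammingNorm (x + y) := hammingDist_zero_right _
  have h3 : hammingDist y 0 = hammingNorm y := hammingDist_zero_right _
  omega

lemma hammingNorm_single (c : Coords m) :
    hammingNorm (Pi.single c 1 : Coords m → ZMod 2) = 1 := by
  rw [hammingNorm_eq, Finset.card_eq_one]
  refine ⟨c, ?_⟩
  ext c'
  by_cases h : c' = c <;> simp [h, Pi.single_eq_of_ne]

lemma exists_vec_aux (n : ℕ) : ∀ T : Finset (Fin m), T.card = n → Even T.card →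
    ∃ y : Coords m → ZMod 2, Tset y = T ∧ hammingNorm y ≤ T.card / 2 := by
  induction n using Nat.strong_induction_on with
  | _ n ih =>
    intro T h hT
    rcases Nat.eq_zero_or_pos n with h0 | hpos
    · refine ⟨0, ?_, ?_⟩
      · have : T = ∅ := Finset.card_eq_zero.1 (h.trans h0)
        rw [this]
        ext i; simp [mem_Tset, synd, Hmat]
      · simp [hammingNorm_eq]
    · have h2 : 2 ≤ T.card := by
        rcases hT with ⟨k, hk⟩; omega
      obtain ⟨u, hu⟩ := Finset.card_pos.1 (by omega : 0 < T.card)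
      obtain ⟨v, hv⟩ := Finset.card_pos.1
        (by rw [Finset.card_erase_of_mem hu]; omega : 0 < (T.erase u).card)
      have huv : v ≠ u := (Finset.mem_erase.1 hv).1
      have hvT : v ∈ T := (Finset.mem_erase.1 hv).2
      set c : Coords m := ⟨{u, v}, by rw [Finset.card_insert_of_notMem (by simp [huv.symm]), Finset.card_singleton]⟩
      set T' := T \ ({u, v} : Finset (Fin m))
      have hsub : ({u, v} : Finset (Fin m)) ⊆ T := by
        intro w hw; rcases Finset.mem_insert.1 hw with h | h
        · exact h ▸ hu
        · exact (Finset.mem_singleton.1 h) ▸ hvT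
      have hT'card : T'.card = T.card - 2 := by
        rw [Finset.card_sdiff_of_subset hsub]
        congr 1
        exact c.2
      have hT'even : Even T'.card := by rcases hT with ⟨k, hk⟩; rw [hT'card]; exact ⟨k-1, by omega⟩
      obtain ⟨y', hy'T, hy'n⟩ := ih (T.card - 2) (by omega) T' (by omega) hT'even
      refine ⟨y' + (Pi.single c 1 : Coords m → ZMod 2), ?_, ?_⟩
      · rw [Tset_add_single, hy'T]
        have hdisj : Disjoint T' (c.1) := Finset.sdiff_disjoint
        rw [symmDiff_eq_sup_sdiff_inf, Finset.sup_eq_union, Finset.inf_eq_inter,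
          Finset.disjoint_iff_inter_eq_empty.1 hdisj, Finset.sdiff_empty]
        show T' ∪ {u, v} = T
        rw [Finset.sdiff_union_of_subset hsub]
      · have hle := hammingNorm_add_le y' (Pi.single c 1 : Coords m → ZMod 2)
        rw [hammingNorm_single] at hle
        omega
end S14

namespace S14
variable {m : ℕ}
lemma exists_vec (T : Finset (Fin m)) (hT : Even T.card) :
    ∃ y : Coords m → ZMod 2, Tset y = T ∧ hammingNorm y ≤ T.card / 2 :=
  exists_vec_aux T.card T rfl hT
end S14

namespace S14
variable {m : ℕ}

lemma neg_self (a : ZMod 2) : -a = a := by revert a; decide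

lemma add_self (a : ZMod 2) : a + a = 0 := by fin_cases a <;> decide

lemma Tset_add (x y : Coords m → ZMod 2) : Tset (x + y) = Tset x ∆ Tset y := by
  ext i
  rw [mem_Tset, Finset.mem_symmDiff, synd_add]
  rcases zmod2_cases (synd x i) with h | h <;> rcases zmod2_cases (synd y i) with h' | h' <;>
    simp [mem_Tset, h, h', show (1:ZMod 2)+1=0 from by decide]

lemma synd_eq_of_Tset_eq {x y : Coords m → ZMod 2} (h : Tset x = Tset y) :
    synd x = synd y := by
  funext i
  by_cases hi : i ∈ Tset x
  · rw [mem_Tset.1 hi, mem_Tset.1 (h ▸ hi)]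
  · rw [synd_eq_zero_of_not_mem hi, synd_eq_zero_of_not_mem (h ▸ hi)]

lemma dist_add (x y : Coords m → ZMod 2) : hammingDist x (x + y) = hammingNorm y := by
  rw [hammingDist_eq_hammingNorm]
  congr 1
  funext i
  simp only [Pi.sub_apply, Pi.add_apply]
  rw [Pi.neg_apply, neg_self, ← add_assoc, add_self, zero_add]

/-- For `c ∈ Cm`, distance from `x` to `c` is at least `|T x|/2`. -/
lemma dist_ge (x c : Coords m → ZMod 2) (hc : c ∈ Cm m) :
    (Tset x).card / 2 ≤ hammingDist x c := by
  have h1 : x + (x + c) = c := by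
    funext i; simp only [Pi.add_apply]
    rw [← add_assoc, add_self, zero_add]
  have h2 : Tset (x + c) = Tset x := by
    rw [Tset_add, mem_Cm_iff_Tset.1 hc, ← Finset.bot_eq_empty, symmDiff_bot]
  have h3 : hammingDist x c = hammingNorm (x + c) := by
    conv_lhs => rw [← h1]
    exact dist_add _ _
  have h4 := card_Tset_le (x + c)
  rw [h2] at h4
  omega

lemma exists_vec' (T : Finset (Fin m)) (hT : Even T.card) :
    ∃ y : Coords m → ZMod 2, Tset y = T ∧ hammingNorm y = T.card / 2 := by
  obtain ⟨y, hy, hle⟩ := exists_vec T hT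
  have := card_Tset_le y
  rw [hy] at this
  exact ⟨y, hy, by omega⟩

lemma distToCode_Cm (x : Coords m → ZMod 2) :
    distToCode (Cm m : Set (Coords m → ZMod 2)) x = (Tset x).card / 2 := by
  obtain ⟨y, hyT, hyn⟩ := exists_vec' (Tset x) (even_card_Tset x)
  have hxy : x + y ∈ Cm m := by
    rw [mem_Cm_iff_Tset, Tset_add, hyT, symmDiff_self, Finset.bot_eq_empty]
  have hmem : (Tset x).card / 2 ∈ {d | ∃ c ∈ (Cm m : Set (Coords m → ZMod 2)), hammingDist x c = d} :=
    ⟨x + y, hxy, by rw [dist_add, hyn]⟩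
  refine le_antisymm (Nat.sInf_le hmem) (le_csInf ⟨_, hmem⟩ ?_)
  rintro d ⟨c, hc, rfl⟩
  exact dist_ge x c hc

lemma mem_Cset_half (hme : 2 ∣ m) (x : Coords m → ZMod 2) :
    x ∈ Cset (Cm m : Set (Coords m → ZMod 2)) (m / 2) ↔ Tset x = Finset.univ := by
  have hcard : (Tset x).card ≤ m := by
    simpa using Finset.card_le_card (Finset.subset_univ (Tset x))
  constructor
  · intro h
    have h1 : (Tset x).card / 2 = m / 2 := by
      have h2 := distToCode_Cm x
      have h3 : distToCode ((Cm m : Set (Coords m → ZMod 2))) x = m / 2 := h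
      omega
    have h2 := even_card_Tset x
    rcases h2 with ⟨k, hk⟩
    rcases hme with ⟨l, hl⟩
    have : (Tset x).card = m := by omega
    exact Finset.eq_univ_of_card _ (by simpa using this)
  · intro h
    show distToCode _ x = m / 2
    rw [distToCode_Cm, h]
    simp

end S14

namespace S14
variable {m : ℕ}

/-- The union code. -/
noncomputable def Cu (m : ℕ) : Set (Coords m → ZMod 2) :=
  (Cm m : Set (Coords m → ZMod 2)) ∪ Cset (Cm m : Set (Coords m → ZMod 2)) (m / 2)

lemma card_Tset_le_m (x : Coords m → ZMod 2) : (Tset x).card ≤ m := by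
  simpa using Finset.card_le_card (Finset.subset_univ (Tset x))

lemma distToCode_Cu (hme : 2 ∣ m) (x : Coords m → ZMod 2) :
    distToCode (Cu m) x = min ((Tset x).card / 2) ((m - (Tset x).card) / 2) := by
  have hTle := card_Tset_le_m x
  have hTeven := even_card_Tset x
  -- candidate 1 : nearest Cm codeword
  obtain ⟨y1, hy1T, hy1n⟩ := exists_vec' (Tset x) hTeven
  have hc1 : x + y1 ∈ Cu m := Or.inl (by
    rw [SetLike.mem_coe, mem_Cm_iff_Tset, Tset_add, hy1T, symmDiff_self, Finset.bot_eq_empty])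
  have hd1 : hammingDist x (x + y1) = (Tset x).card / 2 := by rw [dist_add, hy1n]
  -- candidate 2 : complement matching
  have hcompl : ((Tset x)ᶜ : Finset (Fin m)).card = m - (Tset x).card := by
    rw [Finset.card_compl]; simp
  have hcomple : Even ((Tset x)ᶜ : Finset (Fin m)).card := by
    rcases hTeven with ⟨k, hk⟩; rcases hme with ⟨l, hl⟩
    exact ⟨l - k, by omega⟩
  obtain ⟨y2, hy2T, hy2n⟩ := exists_vec' ((Tset x)ᶜ) hcomple
  have hc2 : x + y2 ∈ Cu m := Or.inr (by
    rw [mem_Cset_half hme, Tset_add, hy2T]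
    ext i
    simp [Finset.mem_symmDiff]
    try tauto)
  have hd2 : hammingDist x (x + y2) = (m - (Tset x).card) / 2 := by
    rw [dist_add, hy2n, hcompl]
  -- lower bound
  have hlb : ∀ z ∈ Cu m, min ((Tset x).card / 2) ((m - (Tset x).card) / 2) ≤ hammingDist x z := by
    intro z hz
    rcases hz with hz | hz
    · exact le_trans (min_le_left _ _) (dist_ge x z hz)
    · refine le_trans (min_le_right _ _) ?_
      have hzT : Tset z = Finset.univ := (mem_Cset_half hme z).1 hz
      have h1 : x + (x + z) = z := by
        funext i; simp only [Pi.add_apply]; rw [← add_assoc, add_self, zero_add]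
      have h3 : hammingDist x z = hammingNorm (x + z) := by
        conv_lhs => rw [← h1]; exact dist_add _ _
      have h2 : Tset (x + z) = (Tset x)ᶜ := by
        rw [Tset_add, hzT]
        ext i
        simp [Finset.mem_symmDiff]
      have h4 := card_Tset_le (x + z)
      rw [h2, hcompl] at h4
      omega
  rcases le_total ((Tset x).card / 2) ((m - (Tset x).card) / 2) with hmin | hmin
  · rw [min_eq_left hmin]
    refine le_antisymm (Nat.sInf_le ⟨x + y1, hc1, hd1⟩) (le_csInf ⟨_, ⟨x + y1, hc1, hd1⟩⟩ ?_)
    rintro d ⟨z, hz, rfl⟩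
    simpa [min_eq_left hmin] using hlb z hz
  · rw [min_eq_right hmin]
    refine le_antisymm (Nat.sInf_le ⟨x + y2, hc2, hd2⟩) (le_csInf ⟨_, ⟨x + y2, hc2, hd2⟩⟩ ?_)
    rintro d ⟨z, hz, rfl⟩
    simpa [min_eq_right hmin] using hlb z hz

lemma mem_Cset_Cu (hme : 2 ∣ m) (x : Coords m → ZMod 2) (j : ℕ) :
    x ∈ Cset (Cu m) j ↔ min ((Tset x).card / 2) ((m - (Tset x).card) / 2) = j := by
  show distToCode (Cu m) x = j ↔ _
  rw [distToCode_Cu hme]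

end S14

namespace S14
variable {m : ℕ}

lemma dist_one (x y : Coords m → ZMod 2) :
    hammingDist x y = 1 ↔ ∃ c : Coords m, y = x + Pi.single c 1 := by
  constructor
  · intro h
    have h1 : (Finset.univ.filter fun c => x c ≠ y c).card = 1 := h
    obtain ⟨c, hc⟩ := Finset.card_eq_one.1 h1
    refine ⟨c, funext fun d => ?_⟩
    by_cases hd : d = c
    · subst hd
      have hne : x d ≠ y d := by
        have : d ∈ Finset.univ.filter fun c => x c ≠ y c := by rw [hc]; simp
        simpa using this
      have : ∀ a b : ZMod 2, a ≠ b → b = a + 1 := by decide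
      simpa [Pi.add_apply] using this _ _ hne
    · have : d ∉ Finset.univ.filter fun c => x c ≠ y c := by rw [hc]; simpa using hd
      simp only [Finset.mem_filter, Finset.mem_univ, true_and, not_not] at this
      simp [Pi.add_apply, Pi.single_eq_of_ne hd, ← this]
  · rintro ⟨c, rfl⟩
    rw [dist_add, hammingNorm_single]

lemma single_inj (x : Coords m → ZMod 2) :
    Function.Injective (fun c : Coords m => x + Pi.single c 1) := by
  intro c c' h
  simp only [add_right_inj] at h
  by_contra hne
  have := congrFun h c
  rw [Pi.single_eq_same, Pi.single_eq_of_ne hne] at this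
  exact one_ne_zero this

lemma nat_card_neighbors (x : Coords m → ZMod 2) (S : Set (Coords m → ZMod 2)) :
    Nat.card {y | hammingDist x y = 1 ∧ y ∈ S} =
      Set.ncard {c : Coords m | (x + Pi.single c 1) ∈ S} := by
  have hset : {y | hammingDist x y = 1 ∧ y ∈ S} =
      (fun c : Coords m => x + Pi.single c 1) '' {c | (x + Pi.single c 1) ∈ S} := by
    ext y
    simp only [Set.mem_setOf_eq, Set.mem_image]
    constructor
    · rintro ⟨h1, h2⟩
      obtain ⟨c, rfl⟩ := (dist_one x y).1 h1
      exact ⟨c, h2, rfl⟩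
    · rintro ⟨c, hc, rfl⟩
      exact ⟨(dist_one x _).2 ⟨c, rfl⟩, hc⟩
  rw [hset, Nat.card_image_of_injective (single_inj x), Nat.card_coe_set_eq]

lemma card_filter_subset (T : Finset (Fin m)) :
    (Finset.univ.filter fun c : Coords m => c.1 ⊆ T).card = T.card.choose 2 := by
  classical
  rw [← Finset.card_powersetCard 2 T]
  apply Finset.card_bij (fun c _ => c.1)
  · intro c hc
    rw [Finset.mem_powersetCard]
    exact ⟨(Finset.mem_filter.1 hc).2, c.2⟩
  · intro c _ c' _ h
    exact Subtype.ext h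
  · intro s hs
    rw [Finset.mem_powersetCard] at hs
    exact ⟨⟨s, hs.2⟩, Finset.mem_filter.2 ⟨Finset.mem_univ _, hs.1⟩, rfl⟩

lemma card_filter_disjoint (T : Finset (Fin m)) :
    (Finset.univ.filter fun c : Coords m => Disjoint c.1 T).card = (m - T.card).choose 2 := by
  classical
  have h1 : ∀ c : Coords m, Disjoint c.1 T ↔ c.1 ⊆ Tᶜ := by
    intro c
    rw [Finset.subset_compl_comm]
    constructor
    · intro h
      intro i hi
      simp only [Finset.mem_compl]
      exact fun hic => (Finset.disjoint_left.1 h) hic hi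
    · intro h
      rw [Finset.disjoint_left]
      intro i hic hiT
      exact Finset.mem_compl.1 (h hiT) hic
  rw [Finset.filter_congr fun c _ => by rw [h1 c]]
  rw [card_filter_subset]
  congr 1
  rw [Finset.card_compl]
  simp

lemma subset_iff_card_inter (c : Coords m) (T : Finset (Fin m)) :
    c.1 ⊆ T ↔ (c.1 ∩ T).card = 2 := by
  constructor
  · intro h
    rw [Finset.inter_eq_left.2 h, c.2]
  · intro h
    have : c.1 ∩ T = c.1 := Finset.eq_of_subset_of_card_le Finset.inter_subset_left (by rw [h, c.2])
    rw [← this]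
    exact Finset.inter_subset_right

lemma disjoint_iff_card_inter (c : Coords m) (T : Finset (Fin m)) :
    Disjoint c.1 T ↔ (c.1 ∩ T).card = 0 := by
  rw [Finset.card_eq_zero, ← Finset.disjoint_iff_inter_eq_empty]

lemma card_symmDiff_two (T : Finset (Fin m)) (c : Coords m) :
    (T ∆ c.1).card = T.card + 2 - 2 * (c.1 ∩ T).card := by
  have hle2 : (c.1 ∩ T).card ≤ 2 := by
    exact le_trans (Finset.card_le_card Finset.inter_subset_left) (le_of_eq c.2)
  have hleT : (c.1 ∩ T).card ≤ T.card := Finset.card_le_card Finset.inter_subset_right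
  rw [symmDiff_eq_sup_sdiff_inf, Finset.sup_eq_union, Finset.inf_eq_inter]
  rw [Finset.card_sdiff_of_subset (Finset.inter_subset_union)]
  have hu : (T ∪ c.1).card = T.card + 2 - (c.1 ∩ T).card := by
    have := Finset.card_union_add_card_inter T c.1
    rw [c.2] at this
    rw [Finset.inter_comm] at this
    omega
  rw [hu, Finset.inter_comm c.1 T, Finset.inter_comm T c.1]
  omega

end S14

namespace S14
variable {m : ℕ}

lemma ncard_coords (P : Coords m → Prop) [DecidablePred P] :
    Set.ncard {c : Coords m | P c} = (Finset.univ.filter P).card := by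
  rw [Set.ncard_eq_toFinset_card', Set.toFinset_setOf]

lemma neighbor_shell (hme : 2 ∣ m) (x : Coords m → ZMod 2) (c : Coords m) (j : ℕ) :
    (x + Pi.single c 1) ∈ Cset (Cu m) j ↔
      min (((Tset x).card + 2 - 2 * (c.1 ∩ Tset x).card) / 2)
          ((m - ((Tset x).card + 2 - 2 * (c.1 ∩ Tset x).card)) / 2) = j := by
  rw [mem_Cset_Cu hme, Tset_add_single, card_symmDiff_two]

lemma inter_facts (c : Coords m) (T : Finset (Fin m)) (hT : T.card ≤ m) :
    (c.1 ∩ T).card ≤ 2 ∧ (c.1 ∩ T).card ≤ T.card ∧ 2 + T.card ≤ m + (c.1 ∩ T).card := by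
  refine ⟨le_trans (Finset.card_le_card Finset.inter_subset_left) (le_of_eq c.2),
    Finset.card_le_card Finset.inter_subset_right, ?_⟩
  have h1 := Finset.card_union_add_card_inter c.1 T
  rw [c.2] at h1
  have h2 : (c.1 ∪ T).card ≤ m := by
    simpa using Finset.card_le_card (Finset.subset_univ (c.1 ∪ T))
  omega

end S14

open S14

/-- for m ≡ 0 (mod 4), m ≥ 6, with ρ = m/4, the completely regular
code C^[m] has intersection numbers b_i = C(m-2i,2), c_i = C(2i,2) for i < ρ, and
c_ρ = 2·C(2ρ,2). -/
theorem stmt_14 (m : ℕ) (hm : 6 ≤ m) (h4 : m % 4 = 0) (ρ : ℕ) (hρ : ρ = m / 4) :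
    compRegular
      ((Cm m : Set (Coords m → ZMod 2)) ∪ Cset (Cm m : Set (Coords m → ZMod 2)) (m / 2)) ρ
      (fun i => (m - 2 * i).choose 2)
      (fun i => if i = ρ then 2 * ((2 * ρ).choose 2) else (2 * i).choose 2) := by
  classical
  have hm8 : 8 ≤ m := by omega
  have hme : 2 ∣ m := ⟨m / 2, by omega⟩
  have hmρ : m = 4 * ρ := by omega
  have hρ2 : 2 ≤ ρ := by omega
  constructor
  · -- the c_i part
    intro i h1 hiρ x hx
    have hx' : x ∈ Cset (Cu m) i := hx
    rw [mem_Cset_Cu hme] at hx'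
    have htE : (Tset x).card % 2 = 0 := Nat.even_iff.1 (even_card_Tset x)
    have htle : (Tset x).card ≤ m := card_Tset_le_m x
    have key : Nat.card {y | hammingDist x y = 1 ∧ y ∈ Cset (Cu m) (i - 1)} =
        (Finset.univ.filter fun c : Coords m =>
          (x + Pi.single c 1) ∈ Cset (Cu m) (i - 1)).card := by
      rw [nat_card_neighbors, ncard_coords]
    show Nat.card {y | hammingDist x y = 1 ∧ y ∈ Cset (Cu m) (i - 1)} = _
    rw [key]
    by_cases hiR : i = ρ
    · subst hiR
      have ht : (Tset x).card = 2 * i := by omega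
      have hset : (Finset.univ.filter fun c : Coords m =>
            (x + Pi.single c 1) ∈ Cset (Cu m) (i - 1)) =
          Finset.univ.filter fun c : Coords m => c.1 ⊆ Tset x ∨ Disjoint c.1 (Tset x) := by
        ext c
        simp only [Finset.mem_filter, Finset.mem_univ, true_and]
        rw [neighbor_shell hme, subset_iff_card_inter, disjoint_iff_card_inter]
        obtain ⟨f1, f2, f3⟩ := inter_facts c (Tset x) htle
        omega
      rw [hset, Finset.filter_or, Finset.card_union_of_disjoint, card_filter_subset,
        card_filter_disjoint]
      · beta_reduce; rw [if_pos rfl]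
        rw [ht, show m - 2 * i = 2 * i by omega]
        omega
      · rw [Finset.disjoint_left]
        intro c hc hc'
        have h2 := (Finset.mem_filter.1 hc).2
        have h0 := (Finset.mem_filter.1 hc').2
        rw [subset_iff_card_inter] at h2
        rw [disjoint_iff_card_inter] at h0
        omega
    · have hlt : i < ρ := lt_of_le_of_ne hiρ hiR
      have hcases : (Tset x).card = 2 * i ∨ (Tset x).card = m - 2 * i := by omega
      simp only [if_neg hiR]
      rcases hcases with ht | ht
      · have hset : (Finset.univ.filter fun c : Coords m =>
              (x + Pi.single c 1) ∈ Cset (Cu m) (i - 1)) =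
            Finset.univ.filter fun c : Coords m => c.1 ⊆ Tset x := by
          ext c
          simp only [Finset.mem_filter, Finset.mem_univ, true_and]
          rw [neighbor_shell hme, subset_iff_card_inter]
          obtain ⟨f1, f2, f3⟩ := inter_facts c (Tset x) htle
          omega
        rw [hset, card_filter_subset, ht]
      · have hset : (Finset.univ.filter fun c : Coords m =>
              (x + Pi.single c 1) ∈ Cset (Cu m) (i - 1)) =
            Finset.univ.filter fun c : Coords m => Disjoint c.1 (Tset x) := by
          ext c
          simp only [Finset.mem_filter, Finset.mem_univ, true_and]
          rw [neighbor_shell hme, disjoint_iff_card_inter]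
          obtain ⟨f1, f2, f3⟩ := inter_facts c (Tset x) htle
          omega
        rw [hset, card_filter_disjoint, ht, show m - (m - 2 * i) = 2 * i by omega]
  · -- the b_i part
    intro i hlt x hx
    have hx' : x ∈ Cset (Cu m) i := hx
    rw [mem_Cset_Cu hme] at hx'
    have htE : (Tset x).card % 2 = 0 := Nat.even_iff.1 (even_card_Tset x)
    have htle : (Tset x).card ≤ m := card_Tset_le_m x
    have key : Nat.card {y | hammingDist x y = 1 ∧ y ∈ Cset (Cu m) (i + 1)} =
        (Finset.univ.filter fun c : Coords m =>
          (x + Pi.single c 1) ∈ Cset (Cu m) (i + 1)).card := by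
      rw [nat_card_neighbors, ncard_coords]
    show Nat.card {y | hammingDist x y = 1 ∧ y ∈ Cset (Cu m) (i + 1)} = _
    rw [key]
    have hcases : (Tset x).card = 2 * i ∨ (Tset x).card = m - 2 * i := by omega
    rcases hcases with ht | ht
    · have hset : (Finset.univ.filter fun c : Coords m =>
            (x + Pi.single c 1) ∈ Cset (Cu m) (i + 1)) =
          Finset.univ.filter fun c : Coords m => Disjoint c.1 (Tset x) := by
        ext c
        simp only [Finset.mem_filter, Finset.mem_univ, true_and]
        rw [neighbor_shell hme, disjoint_iff_card_inter]
        obtain ⟨f1, f2, f3⟩ := inter_facts c (Tset x) htle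
        omega
      rw [hset, card_filter_disjoint, ht]
    · have hset : (Finset.univ.filter fun c : Coords m =>
            (x + Pi.single c 1) ∈ Cset (Cu m) (i + 1)) =
          Finset.univ.filter fun c : Coords m => c.1 ⊆ Tset x := by
        ext c
        simp only [Finset.mem_filter, Finset.mem_univ, true_and]
        rw [neighbor_shell hme, subset_iff_card_inter]
        obtain ⟨f1, f2, f3⟩ := inter_facts c (Tset x) htle
        omega
      rw [hset, card_filter_subset, ht]
end

section
/- For even m > 6, Aut(C^[m]) = Aut(C^(m)), where C^[m] is the span of C^(m) and the all-ones vector. -/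
open Finset

namespace Stmt17
variable {m : ℕ}

def pr (i j : Fin m) (h : i ≠ j) : Coords m :=
  ⟨{i, j}, by rw [Finset.card_insert_of_notMem (by simp [h]), Finset.card_singleton]⟩

def deg (v : Coords m → ZMod 2) (i : Fin m) : ZMod 2 :=
  ∑ c : Coords m, (if i ∈ c.1 then v c else 0)

lemma mem_Cm {v : Coords m → ZMod 2} : v ∈ Cm m ↔ ∀ i : Fin m, deg v i = 0 := by
  simp [Cm, Matrix.mulVecLin, LinearMap.mem_ker, funext_iff, Matrix.mulVec, dotProduct,
    Hmat, ite_mul, deg]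

lemma deg_add (u w : Coords m → ZMod 2) (i : Fin m) :
    deg (u + w) i = deg u i + deg w i := by
  simp only [deg, Pi.add_apply, ← Finset.sum_add_distrib]
  exact Finset.sum_congr rfl fun c _ => by split <;> simp

lemma star_count (T : Finset (Fin m)) (i : Fin m) (hi : i ∈ T) :
    (Finset.univ.filter fun c : Coords m => c.1 ⊆ T ∧ i ∈ c.1).card = T.card - 1 := by
  rw [← Finset.card_erase_of_mem hi]
  refine (Finset.card_bij (fun j hj => pr i j (Finset.ne_of_mem_erase hj).symm) ?_ ?_ ?_).symm
  · intro j hj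
    rw [Finset.mem_erase] at hj
    simp [pr, Finset.insert_subset_iff, hi, hj.2]
  · intro j hj j' hj' hee
    have : ({i, j} : Finset (Fin m)) = {i, j'} := congrArg Subtype.val hee
    have hj1 : j ∈ ({i, j'} : Finset (Fin m)) := this ▸ by simp
    rcases Finset.mem_insert.1 hj1 with h | h
    · exact absurd h (Finset.ne_of_mem_erase hj)
    · simpa using h
  · intro c hc
    rw [Finset.mem_filter] at hc
    obtain ⟨a, b, hab, hcab⟩ := Finset.card_eq_two.1 c.2
    obtain ⟨hsub, hic⟩ := hc.2
    rw [hcab] at hic hsub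
    rcases Finset.mem_insert.1 hic with h | h
    · refine ⟨b, Finset.mem_erase.2 ⟨fun hbi => hab (by rw [← h, ← hbi]), hsub (by simp)⟩, ?_⟩
      apply Subtype.ext
      show ({i, b} : Finset (Fin m)) = c.1
      rw [hcab, h]
    · have h' : i = b := by simpa using h
      refine ⟨a, Finset.mem_erase.2 ⟨fun hai => hab (by rw [← h', ← hai]), hsub (by simp)⟩, ?_⟩
      apply Subtype.ext
      show ({i, a} : Finset (Fin m)) = c.1
      rw [hcab, h', Finset.pair_comm]

/-- deg of an "all 2-subsets of T" indicator vector -/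
lemma deg_indicator (T : Finset (Fin m)) (i : Fin m) :
    deg (fun f : Coords m => if f.1 ⊆ T then (1 : ZMod 2) else 0) i =
      if i ∈ T then ((T.card - 1 : ℕ) : ZMod 2) else 0 := by
  have : deg (fun f : Coords m => if f.1 ⊆ T then (1 : ZMod 2) else 0) i =
      ∑ c : Coords m, (if c.1 ⊆ T ∧ i ∈ c.1 then (1 : ZMod 2) else 0) := by
    refine Finset.sum_congr rfl fun c _ => ?_
    by_cases h1 : i ∈ c.1 <;> by_cases h2 : c.1 ⊆ T <;> simp [h1, h2]
  rw [this, Finset.sum_boole]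
  by_cases hi : i ∈ T
  · rw [star_count T i hi]; simp [hi]
  · have : (Finset.univ.filter fun c : Coords m => c.1 ⊆ T ∧ i ∈ c.1) = ∅ := by
      rw [Finset.filter_eq_empty_iff]
      exact fun c _ h => hi (h.1 h.2)
    rw [this]; simp [hi]

lemma deg_one (he : Even m) (hm : 0 < m) (i : Fin m) :
    deg (fun _ : Coords m => (1 : ZMod 2)) i = 1 := by
  have h0 : (fun _ : Coords m => (1 : ZMod 2)) =
      fun f : Coords m => if f.1 ⊆ Finset.univ then (1 : ZMod 2) else 0 := by
    funext f; simp
  rw [h0, deg_indicator]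
  simp only [Finset.mem_univ, if_true, Finset.card_univ, Fintype.card_fin]
  obtain ⟨k, hk⟩ := he
  have : (m - 1) % 2 = 1 := by omega
  rw [← Nat.mod_add_div (m-1) 2, this]
  push_cast
  rw [show (2 : ZMod 2) = 0 by decide]
  ring

/-- a vector of weight ≤ 3 cannot have odd degree everywhere when m > 6 -/
lemma no_small_odd (hm : 6 < m) (v : Coords m → ZMod 2)
    (hdeg : ∀ i, deg v i = 1) (hw : hammingNorm v ≤ 3) : False := by
  classical
  set F : Finset (Coords m) := Finset.univ.filter (fun c => v c ≠ 0) with hF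
  have hFcard : F.card ≤ 3 := hw
  set B : Finset (Fin m) := F.biUnion (fun c => c.1) with hB
  have hBcard : B.card ≤ 6 := by
    calc B.card ≤ ∑ c ∈ F, c.1.card := Finset.card_biUnion_le
    _ = 2 * F.card := by
      rw [Finset.sum_congr rfl (fun c _ => c.2), Finset.sum_const, smul_eq_mul, Nat.mul_comm]
    _ ≤ 6 := by omega
  have : ∃ i : Fin m, i ∉ B := by
    by_contra hcon
    push_neg at hcon
    have : B = Finset.univ := Finset.eq_univ_iff_forall.2 hcon
    rw [this, Finset.card_univ, Fintype.card_fin] at hBcard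
    omega
  obtain ⟨i, hi⟩ := this
  have : deg v i = 0 := by
    apply Finset.sum_eq_zero
    intro c _
    by_cases hic : i ∈ c.1
    · have : v c = 0 := by
        by_contra hvc
        exact hi (Finset.mem_biUnion.2 ⟨c, Finset.mem_filter.2 ⟨Finset.mem_univ c, hvc⟩, hic⟩)
      simp [hic, this]
    · simp [hic]
  rw [hdeg i] at this
  exact one_ne_zero this

/-- the triangle vector on the 3-set `insert z e.1` -/
def tri (z : Fin m) (e : Coords m) : Coords m → ZMod 2 :=
  fun f => if f.1 ⊆ insert z e.1 then 1 else 0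

lemma tri_mem (z : Fin m) (e : Coords m) (hz : z ∉ e.1) : tri z e ∈ Cm m := by
  rw [mem_Cm]
  intro i
  unfold tri
  rw [deg_indicator]
  have hc : (insert z e.1).card = 3 := by rw [Finset.card_insert_of_notMem hz, e.2]
  by_cases hi : i ∈ insert z e.1 <;> simp [hi, hc]
  decide

lemma tri_wt (z : Fin m) (e : Coords m) (hz : z ∉ e.1) : hammingNorm (tri z e) ≤ 3 := by
  have hc : (insert z e.1).card = 3 := by rw [Finset.card_insert_of_notMem hz, e.2]
  have : hammingNorm (tri z e) ≤ ((insert z e.1).powersetCard 2).card := by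
    apply Finset.card_le_card_of_injOn (fun f => f.1)
    · intro f hf
      simp only [hammingNorm, Finset.mem_filter, tri] at hf
      have : f.1 ⊆ insert z e.1 := by
        by_contra h
        simp [h] at hf
      exact Finset.mem_powersetCard.2 ⟨this, f.2⟩
    · exact fun a _ b _ h => Subtype.ext h
  rwa [Finset.card_powersetCard, hc] at this

lemma permAct_add {ι : Type*} (π : Equiv.Perm ι) (u w : ι → ZMod 2) :
    permAct π (u + w) = permAct π u + permAct π w := rfl

lemma permAct_sum {ι α : Type*} (π : Equiv.Perm ι) (s : Finset α) (g : α → ι → ZMod 2) :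
    permAct π (∑ e ∈ s, g e) = ∑ e ∈ s, permAct π (g e) := by
  funext c
  simp [permAct, Finset.sum_apply]

lemma permAct_one {ι : Type*} (π : Equiv.Perm ι) :
    permAct π (fun _ => (1 : ZMod 2)) = fun _ => 1 := rfl

lemma permAct_inj {ι : Type*} (π : Equiv.Perm ι) {u w : ι → ZMod 2}
    (h : permAct π u = permAct π w) : u = w := by
  funext c
  have := congrFun h (π.symm c)
  simpa [permAct] using this

lemma permAct_norm {ι : Type*} [Fintype ι] [DecidableEq ι] (π : Equiv.Perm ι)
    (v : ι → ZMod 2) : hammingNorm (permAct π v) = hammingNorm v := by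
  unfold hammingNorm permAct
  apply Finset.card_bij (fun c _ => π c)
  · intro c hc
    simp only [Finset.mem_filter, Finset.mem_univ, true_and] at hc ⊢
    exact hc
  · intro a _ b _ h
    exact π.injective h
  · intro d hd
    simp only [Finset.mem_filter, Finset.mem_univ, true_and] at hd ⊢
    exact ⟨π.symm d, by simpa using hd, by simp⟩

lemma zmod2_add_eq_zero : ∀ a b : ZMod 2, a + b = 0 → a = b := by decide

lemma decomp (hm : 0 < m) {v : Coords m → ZMod 2} (hv : v ∈ Cm m) :
    v = ∑ e ∈ Finset.univ.filter
        (fun e : Coords m => v e ≠ 0 ∧ (⟨0, hm⟩ : Fin m) ∉ e.1), tri ⟨0, hm⟩ e := by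
  classical
  set z : Fin m := ⟨0, hm⟩ with hz
  set E : Finset (Coords m) := Finset.univ.filter (fun e : Coords m => v e ≠ 0 ∧ z ∉ e.1) with hE
  set S : Coords m → ZMod 2 := ∑ e ∈ E, tri z e with hS
  have hSmem : S ∈ Cm m :=
    Submodule.sum_mem _ (fun e he => tri_mem z e (Finset.mem_filter.1 he).2.2)
  set r : Coords m → ZMod 2 := v + S with hr
  have hrmem : r ∈ Cm m := Submodule.add_mem _ hv hSmem
  -- the S-value at an edge avoiding z
  have hSf : ∀ f : Coords m, z ∉ f.1 → S f = if f ∈ E then 1 else 0 := by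
    intro f hzf
    rw [hS, Finset.sum_apply]
    rw [Finset.sum_congr rfl (fun e he => ?_), Finset.sum_ite_eq' E f (fun _ => (1 : ZMod 2))]
    show tri z e f = if e = f then 1 else 0
    have hze : z ∉ e.1 := (Finset.mem_filter.1 he).2.2
    unfold tri
    congr 1
    rw [eq_iff_iff]
    constructor
    · intro hsub
      rw [Finset.subset_insert_iff_of_notMem hzf] at hsub
      exact (Subtype.ext (Finset.eq_of_subset_of_card_le hsub (by rw [f.2, e.2]))).symm
    · rintro rfl
      exact Finset.subset_insert _ _
  have stepA : ∀ f : Coords m, z ∉ f.1 → r f = 0 := by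
    intro f hzf
    show v f + S f = 0
    rw [hSf f hzf]
    by_cases hvf : v f = 0
    · have : f ∉ E := by
        rw [hE, Finset.mem_filter]
        push_neg
        intro _ h
        exact absurd hvf h
      simp [this, hvf]
    · have hf1 : v f = 1 := by
        rcases (show ∀ x : ZMod 2, x = 0 ∨ x = 1 by decide) (v f) with h | h
        · exact absurd h hvf
        · exact h
      have hfE : f ∈ E := Finset.mem_filter.2 ⟨Finset.mem_univ f, hvf, hzf⟩
      rw [if_pos hfE, hf1]
      decide
  have stepB : r = 0 := by
    funext f
    by_cases hzf : z ∈ f.1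
    · -- f = {z, w}
      obtain ⟨a, b, hab, hfab⟩ := Finset.card_eq_two.1 f.2
      -- pick w, the endpoint other than z
      have hw : ∃ w : Fin m, w ≠ z ∧ w ∈ f.1 := by
        rw [hfab] at hzf ⊢
        rcases Finset.mem_insert.1 hzf with h | h
        · exact ⟨b, by rw [h]; exact hab.symm, by simp⟩
        · have hzb : z = b := by simpa using h
          exact ⟨a, by rw [hzb]; exact hab, by simp⟩
      obtain ⟨w, hwz, hwf⟩ := hw
      have hdr : deg r w = 0 := mem_Cm.1 hrmem w
      have : deg r w = r f := by
        rw [deg, Finset.sum_eq_single f]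
        · simp [hwf]
        · intro c _ hcf
          by_cases hwc : w ∈ c.1
          · by_cases hzc : z ∈ c.1
            · exfalso
              apply hcf
              have hzw : ({z, w} : Finset (Fin m)) = f.1 :=
                Finset.eq_of_subset_of_card_le
                  (Finset.insert_subset hzf (Finset.singleton_subset_iff.2 hwf))
                  (by rw [f.2, Finset.card_insert_of_notMem (by simp [Ne.symm hwz]),
                    Finset.card_singleton])
              have hsub : f.1 ⊆ c.1 := by
                rw [← hzw]
                exact Finset.insert_subset hzc (Finset.singleton_subset_iff.2 hwc)
              exact (Subtype.ext (Finset.eq_of_subset_of_card_le hsub (by rw [f.2, c.2]))).symm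
            · rw [if_pos hwc]
              exact stepA c hzc
          · simp [hwc]
        · intro h
          exact absurd (Finset.mem_univ f) h
      rw [hdr] at this
      exact this.symm
    · exact stepA f hzf
  -- conclude v = S
  funext f
  exact zmod2_add_eq_zero (v f) (S f) (congrFun stepB f)

end Stmt17


open Stmt17 in
/-- for even m > 6, Aut(C^[m]) = Aut(C^(m)), where
C^[m] = C^(m) ∪ (C^(m) + 1). -/
theorem stmt_17 (m : ℕ) (hm : 6 < m) (he : Even m) :
    autSet ((Cm m : Set (Coords m → ZMod 2)) ∪
        ((fun v => v + (fun _ => 1)) '' (Cm m : Set (Coords m → ZMod 2)))) =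
      autSet (Cm m : Set (Coords m → ZMod 2)) := by
  classical
  have hm0 : 0 < m := by omega
  have htriv : ∀ u : Coords m → ZMod 2, u + (fun _ => (1 : ZMod 2)) + (fun _ => 1) = u := by
    intro u; funext f
    show u f + 1 + 1 = u f
    rw [add_assoc, show (1 : ZMod 2) + 1 = 0 by decide, add_zero]
  have himg : ∀ v : Coords m → ZMod 2,
      (v ∈ (fun v => v + (fun _ => 1)) '' (Cm m : Set (Coords m → ZMod 2))) ↔
        v + (fun _ => (1 : ZMod 2)) ∈ Cm m := by
    intro v
    constructor
    · rintro ⟨c, hc, rfl⟩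
      rwa [htriv c]
    · intro hvc
      exact ⟨v + (fun _ => 1), hvc, htriv v⟩
  ext π
  simp only [autSet, Set.mem_setOf_eq]
  constructor
  · intro h
    have key : ∀ v, v ∈ Cm m → permAct π v ∈ Cm m := by
      intro v hv
      rw [decomp hm0 hv, permAct_sum]
      apply Submodule.sum_mem
      intro e hef
      rw [Finset.mem_filter] at hef
      have htm : tri (⟨0, hm0⟩ : Fin m) e ∈ Cm m := tri_mem _ e hef.2.2
      have hts := (h (tri (⟨0, hm0⟩ : Fin m) e)).2 (Or.inl htm)
      rcases hts with h1 | h2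
      · exact h1
      · exfalso
        rw [himg] at h2
        have hdeg1 : ∀ i, deg (permAct π (tri (⟨0, hm0⟩ : Fin m) e)) i = 1 := by
          intro i
          have h0 := mem_Cm.1 h2 i
          rw [deg_add, deg_one he hm0] at h0
          exact (show ∀ a : ZMod 2, a + 1 = 0 → a = 1 by decide) _ h0
        apply no_small_odd hm (permAct π (tri (⟨0, hm0⟩ : Fin m) e)) hdeg1
        rw [permAct_norm]
        exact tri_wt _ e hef.2.2
    have hinj : Function.Injective
        (fun c : (Cm m : Set (Coords m → ZMod 2)) =>
          (⟨permAct π c.1, key c.1 c.2⟩ : (Cm m : Set (Coords m → ZMod 2)))) := by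
      intro a b hab
      exact Subtype.ext (permAct_inj π (congrArg Subtype.val hab))
    intro v
    constructor
    · intro hpv
      obtain ⟨⟨c, hc⟩, hce⟩ := (Finite.injective_iff_surjective.1 hinj) ⟨permAct π v, hpv⟩
      have hcv : c = v := permAct_inj π (congrArg Subtype.val hce)
      exact hcv ▸ hc
    · exact key v
  · intro h v
    have h' : ∀ w, permAct π w ∈ Cm m ↔ w ∈ Cm m := fun w => h w
    have h1 : permAct π v + (fun _ => (1 : ZMod 2)) = permAct π (v + fun _ => 1) := rfl
    simp only [Set.mem_union, himg, SetLike.mem_coe]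
    rw [h1, h' v, h' (v + fun _ => 1)]
end
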